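/- arXiv:1606.05514 — 10 statements merged into one kernel-verified Lean document; each statement's English description precedes it below -/
import Mathlib

section
/- Let k ≥ 1 and let m_1, …, m_k be positive integers with m = m_1 + ⋯ + m_k; index the rows and columns of m×m real matrices by pairs (i,j) with 1 ≤ i ≤ k and 1 ≤ j ≤ m_i. Let 0 < a ≤ b be real numbers and let L be the m×m matrix whose ((i,j),(i',j')) entry equals a if i = i' and equals b if i ≠ i'. Let F and G be m×m real symmetric positive semidefinite matrices such that G is the Hadamard (entrywise) product of F and L, and let C be an m×m diagonal matrix with strictly positive diagonal entries. Then Tr[(F + C)⁻¹ G] ≤ Tr[(F_Diag + C)⁻¹ G_Diag]. -/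
open Matrix


lemma trace_transpose_mul_self_nonneg {n : Type*} [Fintype n] (Y : Matrix n n ℝ) :
    0 ≤ Matrix.trace (Yᵀ * Y) := by
  simp only [Matrix.trace, Matrix.diag_apply, Matrix.mul_apply, Matrix.transpose_apply]
  exact Finset.sum_nonneg fun i _ => Finset.sum_nonneg fun j _ => mul_self_nonneg _

lemma key_ineq {n : Type*} [Fintype n] [DecidableEq n] {A : Matrix n n ℝ} (hA : A.PosDef)
    (X : Matrix n n ℝ) (hX : Xᵀ = X) :
    Matrix.trace (X * X) ≤ Matrix.trace (A⁻¹ * X * A * X) := by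
  open scoped MatrixOrder in set S := CFC.sqrt A with hSdef
  have hSS : S * S = A := by open scoped MatrixOrder in exact CFC.sqrt_mul_sqrt_self A hA.posSemidef.nonneg
  have hSH : Sᵀ = S := by
    have : Sᴴ = S := by open scoped MatrixOrder in exact (CFC.sqrt_nonneg A).posSemidef.1
    rw [Matrix.conjTranspose_eq_transpose_of_trivial] at this
    simpa [Matrix.IsHermitian, Matrix.conjTranspose] using this
  have hdet : IsUnit S.det := by
    have : S.det * S.det = A.det := by rw [← Matrix.det_mul, hSS]
    have hA0 : A.det ≠ 0 := hA.det_pos.ne'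
    exact isUnit_iff_ne_zero.2 fun h => hA0 (by rw [← this, h, mul_zero])
  have hSinv : S * S⁻¹ = 1 := Matrix.mul_nonsing_inv S hdet
  have hSinv' : S⁻¹ * S = 1 := Matrix.nonsing_inv_mul S hdet
  have hAinv : A⁻¹ = S⁻¹ * S⁻¹ := by rw [← hSS, Matrix.mul_inv_rev]
  set Y := S⁻¹ * X * S with hY
  have hYt : Yᵀ = S * X * S⁻¹ := by
    rw [hY, Matrix.transpose_mul, Matrix.transpose_mul, hX, Matrix.transpose_nonsing_inv, hSH]
    rw [Matrix.mul_assoc]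
  have e1 : Matrix.trace (Y * Y) = Matrix.trace (X * X) := by
    have h0 : Y * Y = S⁻¹ * (X * X * S) := by
      rw [hY]
      rw [show S⁻¹ * X * S * (S⁻¹ * X * S) = S⁻¹ * X * (S * S⁻¹) * X * S by
        simp only [Matrix.mul_assoc]]
      rw [hSinv]
      simp [Matrix.mul_assoc]
    rw [h0, Matrix.trace_mul_comm, Matrix.mul_assoc, hSinv, Matrix.mul_one]
  have e2 : Matrix.trace (Yᵀ * Y) = Matrix.trace (A⁻¹ * X * A * X) := by
    have h0 : Yᵀ * Y = S * (X * A⁻¹ * X * S) := by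
      rw [hYt, hY, hAinv]
      simp only [Matrix.mul_assoc]
    rw [h0, Matrix.trace_mul_comm]
    rw [show X * A⁻¹ * X * S * S = X * (A⁻¹ * X * A) by
      rw [show X * A⁻¹ * X * S * S = X * A⁻¹ * X * (S * S) by simp only [Matrix.mul_assoc], hSS]
      simp only [Matrix.mul_assoc]]
    rw [Matrix.trace_mul_comm]
  have e3 : Matrix.trace (Y * Y) ≤ Matrix.trace (Yᵀ * Y) := by
    have h0 : (0:ℝ) ≤ Matrix.trace ((Y - Yᵀ)ᵀ * (Y - Yᵀ)) := trace_transpose_mul_self_nonneg _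
    have hexp : (Y - Yᵀ)ᵀ * (Y - Yᵀ) = Yᵀ * Y - Yᵀ * Yᵀ - Y * Y + Y * Yᵀ := by
      rw [Matrix.transpose_sub, Matrix.transpose_transpose]
      noncomm_ring
    rw [hexp] at h0
    have h1 : Matrix.trace (Y * Yᵀ) = Matrix.trace (Yᵀ * Y) := Matrix.trace_mul_comm _ _
    have h2 : Matrix.trace (Yᵀ * Yᵀ) = Matrix.trace (Y * Y) := by
      rw [← Matrix.transpose_mul, Matrix.trace_transpose]
    simp only [Matrix.trace_add, Matrix.trace_sub] at h0
    linarith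
  linarith [e1 ▸ e2 ▸ e3]


lemma diag_entry_inv {n : Type*} [Fintype n] [DecidableEq n] {A : Matrix n n ℝ}
    (hA : A.PosDef) (p : n) : 1 ≤ A p p * A⁻¹ p p := by
  set d : n → ℝ := fun q => if q = p then 1 else 0 with hd
  have h := key_ineq hA (Matrix.diagonal d) (Matrix.diagonal_transpose d)
  have h1 : Matrix.trace (Matrix.diagonal d * Matrix.diagonal d) = 1 := by
    rw [Matrix.diagonal_mul_diagonal, Matrix.trace_diagonal]
    simp [hd]
  have h2 : Matrix.trace (A⁻¹ * Matrix.diagonal d * A * Matrix.diagonal d)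
      = A p p * A⁻¹ p p := by
    simp only [Matrix.trace, Matrix.diag_apply, Matrix.mul_apply, Matrix.diagonal_apply,
      ite_mul, mul_ite, zero_mul, mul_zero, Finset.sum_ite_eq, Finset.sum_ite_eq',
      Finset.mem_univ, if_true, hd]
    simp [Finset.sum_ite_eq, Finset.sum_ite_eq']
    ring
  rw [h1, h2] at h
  exact h

lemma block_trace_ineq {k : ℕ} {m : Fin k → ℕ}
    {A : Matrix (Σ i : Fin k, Fin (m i)) (Σ i : Fin k, Fin (m i)) ℝ} (hA : A.PosDef) :
    (Fintype.card (Σ i : Fin k, Fin (m i)) : ℝ) ≤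
      Matrix.trace (A⁻¹ * Matrix.of (fun p q => if p.1 = q.1 then A p q else 0)) := by
  set d : Fin k → (Σ i : Fin k, Fin (m i)) → ℝ :=
    fun i p => if p.1 = i then 1 else 0 with hd
  have hsum : Matrix.of (fun p q => if p.1 = q.1 then A p q else (0:ℝ))
      = ∑ i : Fin k, Matrix.diagonal (d i) * A * Matrix.diagonal (d i) := by
    ext p q
    simp only [Matrix.sum_apply, Matrix.mul_apply, Matrix.diagonal_apply, hd,
      ite_mul, mul_ite, zero_mul, mul_zero, Finset.sum_ite_eq, Finset.sum_ite_eq',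
      Finset.mem_univ, if_true, Matrix.of_apply]
    by_cases hpq : p.1 = q.1 <;> simp [hpq]
  rw [hsum, Finset.mul_sum, Matrix.trace_sum]
  have hbound : ∀ i : Fin k, ((m i : ℝ)) ≤
      Matrix.trace (A⁻¹ * (Matrix.diagonal (d i) * A * Matrix.diagonal (d i))) := by
    intro i
    have h := key_ineq hA (Matrix.diagonal (d i)) (Matrix.diagonal_transpose _)
    have h1 : Matrix.trace (Matrix.diagonal (d i) * Matrix.diagonal (d i)) = (m i : ℝ) := by
      rw [Matrix.diagonal_mul_diagonal, Matrix.trace_diagonal]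
      have : ∀ p : (Σ i : Fin k, Fin (m i)), d i p * d i p = if p.1 = i then 1 else 0 := by
        intro p; by_cases h : p.1 = i <;> simp [hd, h]
      rw [Finset.sum_congr rfl fun p _ => this p]
      rw [← Finset.univ_sigma_univ, Finset.sum_sigma]
      simp [apply_ite Finset.card, apply_ite (Nat.cast : ℕ → ℝ), Finset.sum_ite_eq]
    calc (m i : ℝ) = Matrix.trace (Matrix.diagonal (d i) * Matrix.diagonal (d i)) := h1.symm
      _ ≤ Matrix.trace (A⁻¹ * Matrix.diagonal (d i) * A * Matrix.diagonal (d i)) := h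
      _ = Matrix.trace (A⁻¹ * (Matrix.diagonal (d i) * A * Matrix.diagonal (d i))) := by
          simp only [Matrix.mul_assoc]
  calc (Fintype.card (Σ i : Fin k, Fin (m i)) : ℝ) = ∑ i : Fin k, (m i : ℝ) := by
        rw [Fintype.card_sigma]; push_cast; simp
    _ ≤ _ := Finset.sum_le_sum fun i _ => hbound i

lemma psd_diag_nonneg {n : Type*} [Fintype n] [DecidableEq n] {F : Matrix n n ℝ}
    (hF : F.PosSemidef) (p : n) : 0 ≤ F p p := by
  exact hF.diag_nonneg

/-- **Reverse majorization inequality** (Theorem B.1 of the paper).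
Indices are pairs `(i, j)` with `i : Fin k`, `j : Fin (m i)`.  `L` has entry `a` on the
diagonal blocks and `b` off the diagonal blocks, `G = F ⊙ L` (Hadamard product), `F, G` are
positive semidefinite and `C = diagonal c` with positive diagonal.  Then
`Tr[(F + C)⁻¹ G] ≤ Tr[(F_Diag + C)⁻¹ G_Diag]`. -/
theorem stmt_0 {k : ℕ} (hk : 1 ≤ k) (m : Fin k → ℕ) (hm : ∀ i, 0 < m i)
    (a b : ℝ) (ha : 0 < a) (hab : a ≤ b)
    (L F G : Matrix (Σ i : Fin k, Fin (m i)) (Σ i : Fin k, Fin (m i)) ℝ)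
    (hL : ∀ p q : Σ i : Fin k, Fin (m i), L p q = if p.1 = q.1 then a else b)
    (hF : F.PosSemidef) (hG : G.PosSemidef) (hFG : G = F ⊙ L)
    (c : (Σ i : Fin k, Fin (m i)) → ℝ) (hc : ∀ p, 0 < c p) :
    Matrix.trace ((F + Matrix.diagonal c)⁻¹ * G) ≤
      Matrix.trace ((Matrix.diagonal (fun p => F p p) + Matrix.diagonal c)⁻¹ *
        Matrix.diagonal (fun p => G p p)) := by
  set A := F + Matrix.diagonal c with hAdef
  have hA : A.PosDef := Matrix.PosDef.posSemidef_add hF (Matrix.PosDef.diagonal hc)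
  have hAdet : IsUnit A.det := hA.det_pos.ne'.isUnit
  have hAinvA : A⁻¹ * A = 1 := Matrix.nonsing_inv_mul A hAdet
  have hApp : ∀ p, A p p = F p p + c p := fun p => by
    simp [hAdef, Matrix.add_apply, Matrix.diagonal_apply_eq]
  set FB := Matrix.of (fun p q => if p.1 = q.1 then F p q else (0:ℝ)) with hFBdef
  set AB := Matrix.of (fun p q => if p.1 = q.1 then A p q else (0:ℝ)) with hABdef
  -- G decomposition
  have hGdecomp : G = b • F - (b - a) • FB := by
    ext p q
    rw [hFG]
    simp only [Matrix.hadamard_apply, hL, Matrix.sub_apply, Matrix.smul_apply, hFBdef,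
      Matrix.of_apply, smul_eq_mul]
    by_cases hpq : p.1 = q.1 <;> simp [hpq] <;> ring
  have hABFB : AB = FB + Matrix.diagonal c := by
    ext p q
    by_cases hpq : p.1 = q.1
    · by_cases hpq2 : p = q
      · subst hpq2
        simp [hABdef, hFBdef, hApp, Matrix.add_apply]
      · simp [hABdef, hFBdef, hpq, Matrix.add_apply, Matrix.diagonal_apply_ne _ hpq2,
          hAdef]
    · have hne : p ≠ q := fun h => hpq (h ▸ rfl)
      simp [hABdef, hFBdef, hpq, Matrix.add_apply, Matrix.diagonal_apply_ne _ hne]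
  -- trace quantities
  set N := (Fintype.card (Σ i : Fin k, Fin (m i)) : ℝ) with hN
  set tc := Matrix.trace (A⁻¹ * Matrix.diagonal c) with htc
  have htcsum : tc = ∑ p, A⁻¹ p p * c p := by
    simp [htc, Matrix.trace, Matrix.mul_diagonal]
  have ht1 : Matrix.trace (A⁻¹ * F) = N - tc := by
    have hFA : F = A - Matrix.diagonal c := by
      rw [hAdef]; exact (add_sub_cancel_right F (Matrix.diagonal c)).symm
    rw [hFA, Matrix.mul_sub, Matrix.trace_sub, hAinvA, Matrix.trace_one]
  have ht2 : N - tc ≤ Matrix.trace (A⁻¹ * FB) := by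
    have : Matrix.trace (A⁻¹ * AB) = Matrix.trace (A⁻¹ * FB) + tc := by
      rw [hABFB, Matrix.mul_add, Matrix.trace_add]
    have hb := block_trace_ineq hA
    rw [← hABdef] at hb
    linarith [hb, this]
  -- LHS
  have hLHS : Matrix.trace (A⁻¹ * G) =
      b * Matrix.trace (A⁻¹ * F) - (b - a) * Matrix.trace (A⁻¹ * FB) := by
    rw [hGdecomp, Matrix.mul_sub, Matrix.mul_smul, Matrix.mul_smul, Matrix.trace_sub,
      Matrix.trace_smul, Matrix.trace_smul, smul_eq_mul, smul_eq_mul]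
  -- RHS
  have hGpp : ∀ p, G p p = a * F p p := by
    intro p
    rw [hFG, Matrix.hadamard_apply, hL]
    simp [mul_comm]
  have hRHS : Matrix.trace ((Matrix.diagonal (fun p => F p p) + Matrix.diagonal c)⁻¹ *
      Matrix.diagonal (fun p => G p p)) = ∑ p, (F p p + c p)⁻¹ * (a * F p p) := by
    have hdinv : (Matrix.diagonal (fun p => F p p + c p))⁻¹
        = Matrix.diagonal (fun p => (F p p + c p)⁻¹) := by
      apply Matrix.inv_eq_right_inv
      rw [Matrix.diagonal_mul_diagonal]
      have hfun : (fun p => (F p p + c p) * (F p p + c p)⁻¹) = fun _ => (1:ℝ) := by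
        funext p
        have hpos : F p p + c p ≠ 0 := by
          have := psd_diag_nonneg hF p; have := hc p; positivity
        field_simp
      rw [hfun, Matrix.diagonal_one]
    rw [Matrix.diagonal_add, hdinv, Matrix.diagonal_mul_diagonal, Matrix.trace_diagonal]
    exact Finset.sum_congr rfl fun p _ => by rw [hGpp p]
  -- pointwise bound
  have hpt : ∀ p : (Σ i : Fin k, Fin (m i)),
      1 - A⁻¹ p p * c p ≤ (F p p + c p)⁻¹ * F p p := by
    intro p
    have hdi := diag_entry_inv hA p
    rw [hApp p] at hdi
    have hFpp : 0 ≤ F p p := psd_diag_nonneg hF p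
    have hpos : 0 < F p p + c p := by linarith [hc p]
    have huy : (F p p + c p)⁻¹ ≤ A⁻¹ p p := by
      rw [inv_eq_one_div, div_le_iff₀ hpos]
      nlinarith
    have hxu : (F p p + c p)⁻¹ * F p p = 1 - c p * (F p p + c p)⁻¹ := by
      field_simp
      ring
    rw [hxu]
    nlinarith [mul_le_mul_of_nonneg_left huy (hc p).le]
  have hsumpt : N - tc ≤ ∑ p, (F p p + c p)⁻¹ * F p p := by
    rw [htcsum, hN, Fintype.card_eq_sum_ones]
    push_cast
    rw [← Finset.sum_sub_distrib]
    exact Finset.sum_le_sum fun p _ => hpt p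
  -- combine
  rw [hRHS]
  have hfinal : ∑ p, (F p p + c p)⁻¹ * (a * F p p)
      = a * ∑ p, (F p p + c p)⁻¹ * F p p := by
    rw [Finset.mul_sum]
    exact Finset.sum_congr rfl fun p _ => by ring
  rw [hLHS, hfinal, ht1]
  nlinarith [ht2, hsumpt, ha.le, hab]
end

section
/- Let k ≥ 1 and let m_1, …, m_k be positive integers with m = m_1 + ⋯ + m_k; index the rows and columns of m×m matrices by pairs (i,j) with 1 ≤ i ≤ k and 1 ≤ j ≤ m_i. Let A be an m×m Hermitian positive semidefinite matrix that is block diagonal with respect to this partition (its ((i,j),(i',j')) entry is 0 whenever i ≠ i'), let B be an m×m Hermitian matrix that is block off-diagonal (its ((i,j),(i',j')) entry is 0 whenever i = i') and such that A + B is positive semidefinite, and let C be an m×m diagonal matrix with strictly positive diagonal entries. Then Tr[(A + B + C)⁻¹ B] ≤ 0. -/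
open Matrix

lemma trace_nonneg_of_posSemidef {n : Type*} [Fintype n] [DecidableEq n]
    {P : Matrix n n ℝ} (hP : P.PosSemidef) : 0 ≤ P.trace := by
  rw [Matrix.trace]
  refine Finset.sum_nonneg fun i _ => ?_
  have := hP.dotProduct_mulVec_nonneg (Pi.single i 1)
  simpa [dotProduct, Matrix.mulVec, Pi.single_apply] using this

lemma trace_mul_nonneg_of_posSemidef {n : Type*} [Fintype n] [DecidableEq n]
    {P Q : Matrix n n ℝ} (hP : P.PosSemidef) (hQ : Q.PosSemidef) :
    0 ≤ (P * Q).trace := by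
  open scoped MatrixOrder in
  obtain ⟨R, rfl⟩ := CStarAlgebra.nonneg_iff_eq_star_mul_self.mp hQ.nonneg
  calc (0:ℝ) ≤ (R * P * Rᴴ).trace :=
        trace_nonneg_of_posSemidef (hP.mul_mul_conjTranspose_same R)
    _ = (P * (Rᴴ * R)).trace := by
        rw [Matrix.trace_mul_cycle R P Rᴴ, Matrix.trace_mul_comm]

/-- If `A` is Hermitian positive semidefinite and block diagonal, `B` is Hermitian and block
off-diagonal with `A + B` positive semidefinite, and `C` is a diagonal matrix with strictly
positive diagonal entries, then `Tr[(A + B + C)⁻¹ B] ≤ 0`. -/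
theorem stmt_1 {k : ℕ} (hk : 1 ≤ k) (m : Fin k → ℕ) (hm : ∀ i, 0 < m i)
    (A B : Matrix (Σ i : Fin k, Fin (m i)) (Σ i : Fin k, Fin (m i)) ℝ)
    (hA : A.PosSemidef)
    (hAblock : ∀ p q : Σ i : Fin k, Fin (m i), p.1 ≠ q.1 → A p q = 0)
    (hB : B.IsHermitian)
    (hBblock : ∀ p q : Σ i : Fin k, Fin (m i), p.1 = q.1 → B p q = 0)
    (hAB : (A + B).PosSemidef)
    (c : (Σ i : Fin k, Fin (m i)) → ℝ) (hc : ∀ p, 0 < c p) :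
    Matrix.trace ((A + B + Matrix.diagonal c)⁻¹ * B) ≤ 0 := by
  classical
  set Y : Matrix (Σ i : Fin k, Fin (m i)) (Σ i : Fin k, Fin (m i)) ℝ :=
    A + Matrix.diagonal c with hYdef
  set M : Matrix (Σ i : Fin k, Fin (m i)) (Σ i : Fin k, Fin (m i)) ℝ :=
    A + B + Matrix.diagonal c with hMdef
  have hdiag : (Matrix.diagonal c).PosDef :=
    Matrix.posDef_diagonal_iff.mpr fun p => hc p
  have hYpd : Y.PosDef := Matrix.PosDef.posSemidef_add hA hdiag
  have hMpd : M.PosDef := Matrix.PosDef.posSemidef_add hAB hdiag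
  have hYunit : IsUnit Y.det := (Matrix.isUnit_iff_isUnit_det _).mp hYpd.isUnit
  have hMunit : IsUnit M.det := (Matrix.isUnit_iff_isUnit_det _).mp hMpd.isUnit
  have hYY : Y⁻¹ * Y = 1 := Matrix.nonsing_inv_mul _ hYunit
  have hYY' : Y * Y⁻¹ = 1 := Matrix.mul_nonsing_inv _ hYunit
  have hMM : M⁻¹ * M = 1 := Matrix.nonsing_inv_mul _ hMunit
  have hMM' : M * M⁻¹ = 1 := Matrix.mul_nonsing_inv _ hMunit
  -- Y⁻¹ is block diagonal
  have hYblock : ∀ p q : Σ i : Fin k, Fin (m i), p.1 ≠ q.1 → Y p q = 0 := by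
    intro p q h
    have : (Matrix.diagonal c) p q = 0 := Matrix.diagonal_apply_ne c (fun e => h (by rw [e]))
    simp [hYdef, Matrix.add_apply, hAblock p q h, this]
  have hYtri : Y.BlockTriangular Sigma.fst := fun p q h => hYblock p q (ne_of_gt h)
  haveI : Invertible Y := hYpd.isUnit.invertible
  have hYinvTri : Y⁻¹.BlockTriangular Sigma.fst :=
    Matrix.blockTriangular_inv_of_blockTriangular hYtri
  have hYinvSymm : Y⁻¹ᵀ = Y⁻¹ := by
    rw [Matrix.transpose_nonsing_inv]
    congr 1
    simpa [Matrix.IsHermitian, Matrix.conjTranspose_eq_transpose_of_trivial] using hYpd.isHermitian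
  have hYinvBlock : ∀ p q : Σ i : Fin k, Fin (m i), p.1 ≠ q.1 → Y⁻¹ p q = 0 := by
    intro p q h
    rcases lt_or_gt_of_ne h with hlt | hgt
    · have := hYinvTri (i := q) (j := p) hlt
      calc Y⁻¹ p q = Y⁻¹ᵀ q p := rfl
        _ = Y⁻¹ q p := by rw [hYinvSymm]
        _ = 0 := this
    · exact hYinvTri hgt
  -- trace (Y⁻¹ * B) = 0
  have htraceYB : (Y⁻¹ * B).trace = 0 := by
    rw [Matrix.trace]
    refine Finset.sum_eq_zero fun p _ => ?_
    simp only [Matrix.diag_apply, Matrix.mul_apply]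
    refine Finset.sum_eq_zero fun q _ => ?_
    by_cases h : p.1 = q.1
    · rw [hBblock q p h.symm, mul_zero]
    · rw [hYinvBlock p q h, zero_mul]
  -- the tangent-line PSD matrix
  have hE : (Y⁻¹ - M⁻¹)ᴴ = Y⁻¹ - M⁻¹ := by
    rw [conjTranspose_sub]
    rw [hYpd.inv.isHermitian.eq, hMpd.inv.isHermitian.eq]
  have hPsd : ((Y⁻¹ - M⁻¹) * M * (Y⁻¹ - M⁻¹)ᴴ).PosSemidef :=
    hMpd.posSemidef.mul_mul_conjTranspose_same (Y⁻¹ - M⁻¹)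
  have hexpand : (Y⁻¹ - M⁻¹) * M * (Y⁻¹ - M⁻¹)ᴴ
      = Y⁻¹ * M * Y⁻¹ - Y⁻¹ - Y⁻¹ + M⁻¹ := by
    rw [hE]
    have e1 : (Y⁻¹ - M⁻¹) * M = Y⁻¹ * M - 1 := by
      rw [Matrix.sub_mul, hMM]
    rw [e1, Matrix.sub_mul, Matrix.mul_sub, Matrix.one_mul,
      Matrix.mul_assoc Y⁻¹ M M⁻¹, hMM', Matrix.mul_one]
    abel
  have key : 0 ≤ ((Y⁻¹ * M * Y⁻¹ - Y⁻¹ - Y⁻¹ + M⁻¹) * Y).trace := by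
    rw [← hexpand]
    exact trace_mul_nonneg_of_posSemidef hPsd hYpd.posSemidef
  -- expand the trace inequality
  have hMY : M = Y + B := by rw [hMdef, hYdef]; abel
  have hYMtrace : (Y⁻¹ * M).trace = (1 : Matrix (Σ i : Fin k, Fin (m i)) (Σ i : Fin k, Fin (m i)) ℝ).trace := by
    rw [hMY, Matrix.mul_add, Matrix.trace_add, hYY, htraceYB, add_zero]
  have hexp2 : ((Y⁻¹ * M * Y⁻¹ - Y⁻¹ - Y⁻¹ + M⁻¹) * Y).trace
      = (Y⁻¹ * M).trace - 2 * (1 : Matrix (Σ i : Fin k, Fin (m i)) (Σ i : Fin k, Fin (m i)) ℝ).trace + (M⁻¹ * Y).trace := by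
    rw [Matrix.add_mul, Matrix.sub_mul, Matrix.sub_mul, Matrix.trace_add,
      Matrix.trace_sub, Matrix.trace_sub, Matrix.mul_assoc (Y⁻¹ * M) Y⁻¹ Y, hYY,
      Matrix.mul_one]
    ring
  have hMinvY : (1 : Matrix (Σ i : Fin k, Fin (m i)) (Σ i : Fin k, Fin (m i)) ℝ).trace ≤ (M⁻¹ * Y).trace := by
    have := key
    rw [hexp2, hYMtrace] at this
    linarith
  -- conclude
  have hfinal : (M⁻¹ * B).trace = (1 : Matrix (Σ i : Fin k, Fin (m i)) (Σ i : Fin k, Fin (m i)) ℝ).trace - (M⁻¹ * Y).trace := by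
    have : B = M - Y := by rw [hMY]; abel
    rw [this, Matrix.mul_sub, Matrix.trace_sub, hMM]
  show (M⁻¹ * B).trace ≤ 0
  rw [hfinal]
  linarith
end

section
/- Let F be an n×n Hermitian positive semidefinite matrix and let C be an n×n diagonal matrix with strictly positive diagonal entries. Then Tr[(F + C)⁻¹ F] ≤ Tr[(F_Diag + C)⁻¹ F_Diag]. -/
open Matrix

private lemma diag_inv_key {n : ℕ} {A : Matrix (Fin n) (Fin n) ℝ} (hA : A.PosDef) (i : Fin n) :
    1 ≤ A i i * A⁻¹ i i := by
  classical
  set S := (open scoped MatrixOrder in CFC.sqrt A) with hSdef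
  have hS : S * S = A := open scoped MatrixOrder in CFC.sqrt_mul_sqrt_self A hA.posSemidef.nonneg
  have hSherm : S.IsHermitian := open scoped MatrixOrder in (CFC.sqrt_nonneg A).posSemidef.1
  have hSsym : ∀ a b, S a b = S b a := by
    intro a b
    have := congrFun (congrFun hSherm a) b
    simpa [Matrix.conjTranspose_apply] using this.symm
  have hdet : IsUnit S.det := by
    have hAdet : (0:ℝ) < A.det := hA.det_pos
    have hmul : S.det * S.det = A.det := by rw [← Matrix.det_mul, hS]
    have hne : S.det ≠ 0 := by
      intro h
      rw [h, mul_zero] at hmul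
      exact hAdet.ne' hmul.symm
    exact isUnit_iff_ne_zero.mpr hne
  have hSSinv : S * S⁻¹ = 1 := Matrix.mul_nonsing_inv S hdet
  have hAinv : A⁻¹ = S⁻¹ * S⁻¹ := by rw [← hS, Matrix.mul_inv_rev]
  have hSinvsym : ∀ a b, S⁻¹ a b = S⁻¹ b a := by
    intro a b
    have h := hSherm.inv
    have := congrFun (congrFun h a) b
    simpa [Matrix.conjTranspose_apply] using this.symm
  have h1 : (1:ℝ) = ∑ j, S i j * S⁻¹ i j := by
    have := congrFun (congrFun hSSinv i) i
    simp only [Matrix.mul_apply, Matrix.one_apply_eq] at this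
    rw [← this]
    exact Finset.sum_congr rfl fun j _ => by rw [hSinvsym i j]
  have hAii : A i i = ∑ j, S i j ^ 2 := by
    rw [← hS]
    simp only [Matrix.mul_apply]
    exact Finset.sum_congr rfl fun j _ => by rw [sq, hSsym i j]
  have hAinvii : A⁻¹ i i = ∑ j, S⁻¹ i j ^ 2 := by
    rw [hAinv]
    simp only [Matrix.mul_apply]
    exact Finset.sum_congr rfl fun j _ => by rw [sq, hSinvsym i j]
  calc (1:ℝ) = (∑ j, S i j * S⁻¹ i j) ^ 2 := by rw [← h1]; norm_num
    _ ≤ (∑ j, S i j ^ 2) * ∑ j, S⁻¹ i j ^ 2 :=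
        Finset.sum_mul_sq_le_sq_mul_sq _ _ _
    _ = A i i * A⁻¹ i i := by rw [hAii, hAinvii]

/-- If `F` is Hermitian positive semidefinite and `C` is a diagonal matrix with strictly
positive diagonal entries, then `Tr[(F + C)⁻¹ F] ≤ Tr[(F_Diag + C)⁻¹ F_Diag]`. -/
theorem stmt_2 {n : ℕ} (F : Matrix (Fin n) (Fin n) ℝ) (hF : F.PosSemidef)
    (c : Fin n → ℝ) (hc : ∀ i, 0 < c i) :
    Matrix.trace ((F + Matrix.diagonal c)⁻¹ * F) ≤
      Matrix.trace ((Matrix.diagonal (fun i => F i i) + Matrix.diagonal c)⁻¹ *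
        Matrix.diagonal (fun i => F i i)) := by
  classical
  set A := F + Matrix.diagonal c with hAdef
  have hA : A.PosDef := Matrix.PosDef.posSemidef_add hF (Matrix.PosDef.diagonal hc)
  have hdnn : ∀ i, 0 ≤ F i i := fun i => by
    have := hF.diag_nonneg (i := i)
    simpa using this
  have hdc : ∀ i, 0 < F i i + c i := fun i => add_pos_of_nonneg_of_pos (hdnn i) (hc i)
  have hAii : ∀ i, A i i = F i i + c i := fun i => by
    simp [hAdef, Matrix.diagonal_apply_eq]
  have hdet : IsUnit A.det := isUnit_iff_ne_zero.mpr hA.det_pos.ne'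
  have hAinvA : A⁻¹ * A = 1 := Matrix.nonsing_inv_mul A hdet
  have hLHS : Matrix.trace (A⁻¹ * F) = (n : ℝ) - ∑ i, c i * A⁻¹ i i := by
    have hsplit : A⁻¹ * F = A⁻¹ * A - A⁻¹ * Matrix.diagonal c := by
      rw [← Matrix.mul_sub, hAdef]
      congr 1
      abel
    rw [hsplit, Matrix.trace_sub, hAinvA, Matrix.trace_one]
    simp [Matrix.trace, Matrix.diag, Matrix.mul_diagonal, mul_comm]
  have hRHS : Matrix.trace ((Matrix.diagonal (fun i => F i i) + Matrix.diagonal c)⁻¹ *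
        Matrix.diagonal (fun i => F i i)) = (n : ℝ) - ∑ i, c i * (F i i + c i)⁻¹ := by
    have hinvdiag : (Matrix.diagonal (fun i => F i i + c i))⁻¹ =
        Matrix.diagonal (fun i => (F i i + c i)⁻¹) := by
      refine Matrix.inv_eq_right_inv ?_
      have h1 : (fun i => (F i i + c i) * (F i i + c i)⁻¹) = fun _ => (1:ℝ) :=
        funext fun i => mul_inv_cancel₀ (hdc i).ne'
      rw [Matrix.diagonal_mul_diagonal, h1, Matrix.diagonal_one]
    rw [Matrix.diagonal_add, hinvdiag, Matrix.diagonal_mul_diagonal, Matrix.trace_diagonal]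
    have hterm : ∀ i, (F i i + c i)⁻¹ * F i i = 1 - c i * (F i i + c i)⁻¹ := by
      intro i
      have h := (hdc i).ne'
      field_simp
      ring
    rw [Finset.sum_congr rfl (fun i _ => hterm i), Finset.sum_sub_distrib]
    simp
  rw [hLHS, hRHS]
  have hsum : ∑ i, c i * (F i i + c i)⁻¹ ≤ ∑ i, c i * A⁻¹ i i := by
    refine Finset.sum_le_sum fun i _ => ?_
    have hkey := diag_inv_key hA i
    rw [hAii i, mul_comm] at hkey
    have hinv : (F i i + c i)⁻¹ ≤ A⁻¹ i i := by
      rw [inv_eq_one_div, div_le_iff₀ (hdc i)]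
      linarith
    exact mul_le_mul_of_nonneg_left hinv (hc i).le
  linarith
end

section
/- Let Ω be a closed interval in ℝ, let A be an n×n Hermitian matrix all of whose eigenvalues lie in Ω, and let f : Ω → ℝ be a convex function. Then Tr(f(A)) ≥ Tr(f(A_Diag)). -/
open Matrix

private lemma trace_cfc_eq_sum {n : ℕ} (B : Matrix (Fin n) (Fin n) ℝ) (hB : B.IsHermitian)
    (f : ℝ → ℝ) : Matrix.trace (hB.cfc f) = ∑ i, f (hB.eigenvalues i) := by
  rw [Matrix.IsHermitian.cfc, Unitary.conjStarAlgAut_apply, Matrix.trace_mul_cycle]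
  rw [Unitary.star_mul_self_of_mem (SetLike.coe_mem _), one_mul, trace_diagonal]
  simp [RCLike.ofReal]

private lemma jensen_ds {n : ℕ} (α β : ℝ) (f : ℝ → ℝ) (hf : ConvexOn ℝ (Set.Icc α β) f)
    (w : Fin n → Fin n → ℝ) (hw0 : ∀ i j, 0 ≤ w i j)
    (hrow : ∀ i, ∑ j, w i j = 1) (hcol : ∀ j, ∑ i, w i j = 1)
    (x : Fin n → ℝ) (hx : ∀ j, x j ∈ Set.Icc α β) :
    ∑ i, f (∑ j, w i j * x j) ≤ ∑ j, f (x j) := by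
  calc ∑ i, f (∑ j, w i j * x j) ≤ ∑ i, ∑ j, w i j * f (x j) := by
        refine Finset.sum_le_sum fun i _ => ?_
        simpa [smul_eq_mul] using hf.map_sum_le (fun j _ => hw0 i j) (hrow i) (fun j _ => hx j)
    _ = ∑ j, (∑ i, w i j) * f (x j) := by rw [Finset.sum_comm]; simp [Finset.sum_mul]
    _ = ∑ j, f (x j) := by simp [hcol]

private lemma unitary_row_sq_sum {n : ℕ} (U : Matrix (Fin n) (Fin n) ℝ)
    (hU : U ∈ unitary (Matrix (Fin n) (Fin n) ℝ)) (i : Fin n) :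
    ∑ j, (U i j)^2 = 1 := by
  have h := congrFun (congrFun hU.2 i) i
  simpa [mul_apply, conjTranspose_apply, sq] using h

private lemma unitary_col_sq_sum {n : ℕ} (U : Matrix (Fin n) (Fin n) ℝ)
    (hU : U ∈ unitary (Matrix (Fin n) (Fin n) ℝ)) (i : Fin n) :
    ∑ j, (U j i)^2 = 1 := by
  have h := congrFun (congrFun hU.1 i) i
  simpa [mul_apply, conjTranspose_apply, sq] using h

private lemma diag_entry_eq_sum {n : ℕ} (A : Matrix (Fin n) (Fin n) ℝ) (hA : A.IsHermitian)
    (i : Fin n) :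
    A i i = ∑ j, ((hA.eigenvectorUnitary : Matrix (Fin n) (Fin n) ℝ) i j)^2
      * hA.eigenvalues j := by
  conv_lhs => rw [hA.spectral_theorem]
  simp [mul_apply, diagonal, RCLike.ofReal, star]
  exact Finset.sum_congr rfl fun j _ => by ring

private lemma eig_diag_eq_sum {n : ℕ} (d : Fin n → ℝ) (i : Fin n) :
    (Matrix.isHermitian_diagonal d).eigenvalues i =
      ∑ j, (((Matrix.isHermitian_diagonal d).eigenvectorUnitary :
        Matrix (Fin n) (Fin n) ℝ) j i)^2 * d j := by
  set hD := Matrix.isHermitian_diagonal d with hDdef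
  set U : Matrix (Fin n) (Fin n) ℝ := (hD.eigenvectorUnitary : Matrix (Fin n) (Fin n) ℝ) with hU
  have h1 : star U * diagonal d * U = diagonal (RCLike.ofReal ∘ hD.eigenvalues) := by
    calc star U * diagonal d * U
        = star U * (U * diagonal (RCLike.ofReal ∘ hD.eigenvalues) * star U) * U := by
          conv_lhs => rw [hD.spectral_theorem, Unitary.conjStarAlgAut_apply]
      _ = diagonal (RCLike.ofReal ∘ hD.eigenvalues) := by
          rw [← mul_assoc, ← mul_assoc, Unitary.star_mul_self_of_mem (SetLike.coe_mem _), one_mul,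
            mul_assoc, Unitary.star_mul_self_of_mem (SetLike.coe_mem _), mul_one]
  have h := congrFun (congrFun h1 i) i
  simp only [mul_apply, diagonal_apply, conjTranspose_apply, star_trivial, RCLike.ofReal,
    Function.comp_apply] at h
  simp only [if_true, Finset.sum_ite_eq, Finset.mem_univ] at h
  refine Eq.trans h.symm ?_
  refine Finset.sum_congr rfl fun j _ => ?_
  simp only [mul_ite, mul_zero, Finset.sum_ite_eq', Finset.mem_univ, if_true,
    Matrix.star_apply, conjTranspose_apply, star_trivial, sq]
  ring

/-- Majorization trace inequality: for a Hermitian matrix `A` with all eigenvalues in the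
closed interval `[α, β]` and a convex function `f` on `[α, β]`,
`Tr(f(A)) ≥ Tr(f(A_Diag))`, where `A_Diag` is the diagonal part of `A`. -/
theorem stmt_3 {n : ℕ} (α β : ℝ) (A : Matrix (Fin n) (Fin n) ℝ) (hA : A.IsHermitian)
    (heig : ∀ i, hA.eigenvalues i ∈ Set.Icc α β)
    (f : ℝ → ℝ) (hf : ConvexOn ℝ (Set.Icc α β) f) :
    Matrix.trace ((Matrix.isHermitian_diagonal (fun i => A i i)).cfc f) ≤
      Matrix.trace (hA.cfc f) := by
  have hD := Matrix.isHermitian_diagonal (fun i => A i i)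
  set U : Matrix (Fin n) (Fin n) ℝ := (hA.eigenvectorUnitary : Matrix (Fin n) (Fin n) ℝ) with hUdef
  set V : Matrix (Fin n) (Fin n) ℝ :=
    ((Matrix.isHermitian_diagonal (fun i => A i i)).eigenvectorUnitary :
      Matrix (Fin n) (Fin n) ℝ) with hVdef
  have hUmem := SetLike.coe_mem hA.eigenvectorUnitary
  have hVmem := SetLike.coe_mem (Matrix.isHermitian_diagonal (fun i => A i i)).eigenvectorUnitary
  -- A's diagonal entries lie in [α, β]
  have hdIcc : ∀ i, A i i ∈ Set.Icc α β := by
    intro i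
    rw [diag_entry_eq_sum A hA i]
    have := (convex_Icc α β).sum_mem (t := Finset.univ)
      (w := fun j => (U i j)^2) (z := fun j => hA.eigenvalues j)
      (fun j _ => sq_nonneg _) (unitary_row_sq_sum U hUmem i) (fun j _ => heig j)
    simpa [smul_eq_mul, hUdef] using this
  -- Step 1 : ∑ f(A i i) ≤ ∑ f(λ i)
  have step1 : ∑ i, f (A i i) ≤ ∑ j, f (hA.eigenvalues j) := by
    have := jensen_ds α β f hf (fun i j => (U i j)^2) (fun i j => sq_nonneg _)
      (unitary_row_sq_sum U hUmem) (unitary_col_sq_sum U hUmem) hA.eigenvalues heig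
    calc ∑ i, f (A i i) = ∑ i, f (∑ j, (U i j)^2 * hA.eigenvalues j) := by
          exact Finset.sum_congr rfl fun i _ => by rw [diag_entry_eq_sum A hA i]
      _ ≤ ∑ j, f (hA.eigenvalues j) := this
  -- Step 2 : ∑ f(μ i) ≤ ∑ f(A i i) where μ are eigenvalues of the diagonal part
  have step2 : ∑ i, f ((Matrix.isHermitian_diagonal (fun i => A i i)).eigenvalues i)
      ≤ ∑ j, f (A j j) := by
    have := jensen_ds α β f hf (fun i j => (V j i)^2) (fun i j => sq_nonneg _)
      (unitary_col_sq_sum V hVmem) (unitary_row_sq_sum V hVmem)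
      (fun j => A j j) hdIcc
    calc ∑ i, f ((Matrix.isHermitian_diagonal (fun i => A i i)).eigenvalues i)
        = ∑ i, f (∑ j, (V j i)^2 * A j j) := by
          exact Finset.sum_congr rfl fun i _ => by
            rw [eig_diag_eq_sum (fun i => A i i) i]
      _ ≤ ∑ j, f (A j j) := this
  rw [trace_cfc_eq_sum A hA f, trace_cfc_eq_sum _ (Matrix.isHermitian_diagonal (fun i => A i i)) f]
  exact le_trans step2 step1
end

section
/- Let k ≥ 1, let η > 0, and let d₁, …, d_k be nonnegative real numbers. Let Γ be the k×k matrix whose diagonal entries equal (η + k − 1)/(η(η + k)) and whose off-diagonal entries equal −1/(η(η + k)). Set φ_i = d_i + 1/η, Φ₋₁ = ∑_{i=1}^{k} φ_i⁻¹ and Φ₋₂ = ∑_{i=1}^{k} φ_i⁻². Then the matrix Diag(d₁, …, d_k) + Γ is invertible and Tr[(Diag(d₁, …, d_k) + Γ)⁻¹] = Φ₋₁ + Φ₋₂ / (η(η + k) − Φ₋₁). -/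
open Matrix

lemma aux_diag (x s t : ℝ) (hx : x ≠ 0) (hs : s ≠ 0) (ht : t ≠ 0) :
    x * (x⁻¹ + x⁻¹ * x⁻¹ / t) - 1/s * x⁻¹ - 1/s * ((s - t) * x⁻¹ / t) = 1 := by
  field_simp
  ring

lemma aux_off (x y s t : ℝ) (hx : x ≠ 0) (hy : y ≠ 0) (hs : s ≠ 0) (ht : t ≠ 0) :
    x * (0 + x⁻¹ * y⁻¹ / t) - 1/s * y⁻¹ - 1/s * ((s - t) * y⁻¹ / t) = 0 := by
  field_simp
  ring

/-- Trace of `(Diag(d) + Γ)⁻¹` where `Γ` has diagonal entries `(η+k−1)/(η(η+k))` and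
off-diagonal entries `−1/(η(η+k))`: the matrix `Diag(d) + Γ` is invertible and, with
`φᵢ = dᵢ + 1/η`, `Φ₋₁ = ∑ φᵢ⁻¹` and `Φ₋₂ = ∑ φᵢ⁻²`, its inverse has trace
`Φ₋₁ + Φ₋₂ / (η(η+k) − Φ₋₁)`. -/
theorem stmt_7 {k : ℕ} (hk : 1 ≤ k) (η : ℝ) (hη : 0 < η)
    (d : Fin k → ℝ) (hd : ∀ i, 0 ≤ d i) :
    IsUnit (Matrix.diagonal d +
        Matrix.of (fun i j : Fin k =>
          if i = j then (η + k - 1) / (η * (η + k)) else -1 / (η * (η + k)))) ∧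
      Matrix.trace ((Matrix.diagonal d +
        Matrix.of (fun i j : Fin k =>
          if i = j then (η + k - 1) / (η * (η + k)) else -1 / (η * (η + k))))⁻¹) =
      (∑ i, (d i + 1/η)⁻¹) +
        (∑ i, (d i + 1/η)⁻¹ ^ 2) / (η * (η + k) - ∑ i, (d i + 1/η)⁻¹) := by
  set s : ℝ := η * (η + k) with hs_def
  set φ : Fin k → ℝ := fun i => d i + 1/η with hφ_def
  have hφpos : ∀ i, 0 < φ i := fun i => by
    have := hd i; simp only [hφ_def]; positivity
  have hφne : ∀ i, φ i ≠ 0 := fun i => (hφpos i).ne'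
  have hkpos : (0:ℝ) < k := by exact_mod_cast Nat.lt_of_lt_of_le Nat.zero_lt_one hk
  have hs : 0 < s := by positivity
  have hΦlt : (∑ i, (φ i)⁻¹) < s := by
    have h1 : (∑ i, (φ i)⁻¹) ≤ ∑ _i : Fin k, η := by
      apply Finset.sum_le_sum
      intro i _
      rw [inv_le_comm₀ (hφpos i) hη]
      have := hd i
      simp only [hφ_def]
      rw [one_div]
      linarith
    simp only [Finset.sum_const, Finset.card_univ, Fintype.card_fin, nsmul_eq_mul] at h1
    have : (k:ℝ) * η < s := by
      rw [hs_def]; nlinarith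
    linarith
  set t : ℝ := s - ∑ i, (φ i)⁻¹ with ht_def
  have ht : 0 < t := by simp only [ht_def]; linarith
  set M : Matrix (Fin k) (Fin k) ℝ := Matrix.diagonal d +
        Matrix.of (fun i j : Fin k =>
          if i = j then (η + k - 1) / (η * (η + k)) else -1 / (η * (η + k))) with hM_def
  set N : Matrix (Fin k) (Fin k) ℝ := Matrix.of (fun i j =>
      (if i = j then (φ i)⁻¹ else 0) + (φ i)⁻¹ * (φ j)⁻¹ / t) with hN_def
  have hMentry : ∀ i j, M i j = (if i = j then φ i else 0) - 1/s := by
    intro i j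
    simp only [hM_def, Matrix.add_apply, Matrix.diagonal_apply, Matrix.of_apply]
    split_ifs with h
    · subst h
      simp only [hφ_def, hs_def]
      have hη' : η ≠ 0 := hη.ne'
      have hηk : η + (k:ℝ) ≠ 0 := by positivity
      field_simp
      ring
    · simp only [hs_def]; ring
  have hMN : M * N = 1 := by
    ext i j
    rw [Matrix.mul_apply, Matrix.one_apply]
    have step : ∀ l, M i l * N l j =
        ((if i = l then φ i * ((if l = j then (φ l)⁻¹ else 0) + (φ l)⁻¹ * (φ j)⁻¹ / t) else 0)
        - (1/s) * (if l = j then (φ l)⁻¹ else 0)) - (1/s) * ((φ l)⁻¹ * (φ j)⁻¹ / t) := by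
      intro l
      rw [hMentry, hN_def]
      simp only [Matrix.of_apply]
      split_ifs <;> ring
    rw [Finset.sum_congr rfl (fun l _ => step l)]
    rw [Finset.sum_sub_distrib, Finset.sum_sub_distrib, Finset.sum_ite_eq,
      ← Finset.mul_sum, ← Finset.mul_sum]
    have h1 : (∑ l, if l = j then (φ l)⁻¹ else 0) = (φ j)⁻¹ := by
      rw [Finset.sum_ite_eq']; simp
    have h2 : (∑ l, (φ l)⁻¹ * (φ j)⁻¹ / t) = (∑ l, (φ l)⁻¹) * ((φ j)⁻¹ / t) := by
      simp only [mul_div_assoc]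
      rw [← Finset.sum_mul]
    rw [h1, h2]
    simp only [Finset.mem_univ, if_true]
    have hΦ : (∑ l, (φ l)⁻¹) = s - t := by simp [ht_def]
    rw [hΦ]
    split_ifs with h
    · subst h
      linear_combination aux_diag (φ i) s t (hφne i) hs.ne' ht.ne'
    · linear_combination aux_off (φ i) (φ j) s t (hφne i) (hφne j) hs.ne' ht.ne'
  have hNM : N * M = 1 := mul_eq_one_comm.mp hMN
  have hMinv : M⁻¹ = N := Matrix.inv_eq_right_inv hMN
  refine ⟨⟨⟨M, N, hMN, hNM⟩, rfl⟩, ?_⟩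
  rw [hMinv, Matrix.trace]
  simp only [hN_def, Matrix.diag_apply, Matrix.of_apply, if_true]
  rw [Finset.sum_add_distrib]
  congr 1
  rw [Finset.sum_div]
  apply Finset.sum_congr rfl
  intro i _
  rw [sq]
end

section
/- Let k ≥ 1, let m₁, …, m_k and n be positive integers, let N > 0 and η ≥ 0 be real numbers, and let σ₁, …, σ_k > 0. For each i let Q_i be a real m_i × n matrix each of whose rows has squared Euclidean norm N. Let Q_a be the (∑m_i) × n matrix obtained by stacking Q₁, …, Q_k on top of each other, let Q_b = Q₁ ⊕ Q₂ ⊕ ⋯ ⊕ Q_k be the (∑m_i) × kn block diagonal matrix with blocks Q_i, and let C_Z = ⊕_{i=1}^{k} σ_i² I_{m_i}. Then Tr[(Q_a Q_aᵀ + η Q_b Q_bᵀ + C_Z)⁻¹ Q_a Q_aᵀ] ≤ ∑_{i=1}^{k} N m_i / ((1 + η) N + σ_i²). -/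
open Matrix

lemma quad_form {α β : Type*} [Fintype α] [Fintype β] (Y : Matrix α β ℝ) (w : α → ℝ) :
    w ⬝ᵥ ((Y * Yᵀ) *ᵥ w) = (Yᵀ *ᵥ w) ⬝ᵥ (Yᵀ *ᵥ w) := by
  rw [← mulVec_mulVec, dotProduct_mulVec, ← mulVec_transpose]

lemma congr_diag {α : Type*} [Fintype α] (X V : Matrix α α ℝ) (j : α) :
    (Vᵀ * X * V) j j = (fun q => V q j) ⬝ᵥ (X *ᵥ fun q => V q j) := by
  simp only [mul_apply, transpose_apply, dotProduct, mulVec, Finset.sum_mul, Finset.mul_sum]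
  rw [Finset.sum_comm]
  exact Finset.sum_congr rfl fun r _ => Finset.sum_congr rfl fun q _ => by ring

lemma tangent_line {a b x N : ℝ} (ha : 0 < a) (hb : 0 < b) (hx : 0 ≤ x) (hN : 0 < N) :
    x / (a * x + b) ≤ N / (a * N + b) + b / (a * N + b) ^ 2 * (x - N) := by
  have h1 : 0 < a * x + b := by positivity
  have h2 : 0 < a * N + b := by positivity
  have expand : N / (a * N + b) + b / (a * N + b) ^ 2 * (x - N) - x / (a * x + b)
      = a * b * (x - N) ^ 2 / ((a * N + b) ^ 2 * (a * x + b)) := by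
    field_simp
    ring
  have h3 : 0 ≤ a * b * (x - N) ^ 2 / ((a * N + b) ^ 2 * (a * x + b)) := by positivity
  linarith

lemma inv_diag_ge {ι : Type*} [Fintype ι] [DecidableEq ι] {S : Matrix ι ι ℝ}
    (hS : S.PosDef) (p : ι) : 1 ≤ S p p * S⁻¹ p p := by
  have hdet : IsUnit S.det := (Matrix.isUnit_iff_isUnit_det _).mp hS.isUnit
  have hSS : S * S⁻¹ = 1 := Matrix.mul_nonsing_inv _ hdet
  obtain ⟨R, hRR, hRh⟩ : ∃ R : Matrix ι ι ℝ, R * R = S ∧ Rᵀ = R := by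
    open scoped MatrixOrder in
    exact ⟨CFC.sqrt S, CFC.sqrt_mul_sqrt_self S hS.posSemidef.nonneg,
      by rw [← conjTranspose_eq_transpose_of_trivial]; exact (CFC.sqrt_nonneg S).isSelfAdjoint⟩
  have hSt : Sᵀ = S := by
    have := hS.1
    rwa [Matrix.IsHermitian, conjTranspose_eq_transpose_of_trivial] at this
  have key : ∀ c e : ι → ℝ, (R *ᵥ c) ⬝ᵥ (R *ᵥ e) = c ⬝ᵥ (S *ᵥ e) := by
    intro c e
    rw [dotProduct_mulVec, ← mulVec_transpose, hRh, mulVec_mulVec, hRR,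
      dotProduct_comm, dotProduct_mulVec, ← mulVec_transpose, hSt, dotProduct_comm]
  set x : ι → ℝ := Pi.single p 1 with hxdef
  set y : ι → ℝ := S⁻¹ *ᵥ x with hydef
  have hSy : S *ᵥ y = x := by rw [hydef, mulVec_mulVec, hSS, one_mulVec]
  have huv : (R *ᵥ x) ⬝ᵥ (R *ᵥ y) = 1 := by
    rw [key, hSy, hxdef]
    simp [dotProduct, Pi.single_apply]
  have hu : (R *ᵥ x) ⬝ᵥ (R *ᵥ x) = S p p := by
    rw [key, hxdef]
    simp [dotProduct, Pi.single_apply, mulVec, Finset.mul_sum]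
  have hv : (R *ᵥ y) ⬝ᵥ (R *ᵥ y) = S⁻¹ p p := by
    rw [key, hSy, hydef, dotProduct_comm, hxdef]
    simp [dotProduct, Pi.single_apply, mulVec]
  have cs := Finset.sum_mul_sq_le_sq_mul_sq Finset.univ (fun l => (R *ᵥ x) l) (fun l => (R *ᵥ y) l)
  have h1 : (∑ l, (R *ᵥ x) l * (R *ᵥ y) l) = 1 := huv
  have h2 : (∑ l, ((R *ᵥ x) l) ^ 2) = S p p := by
    rw [← hu]; exact Finset.sum_congr rfl fun l _ => by ring
  have h3 : (∑ l, ((R *ᵥ y) l) ^ 2) = S⁻¹ p p := by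
    rw [← hv]; exact Finset.sum_congr rfl fun l _ => by ring
  rw [h1, h2, h3] at cs
  simpa using cs

/-- The stacked matrix `Q_a` whose rows are the rows of `Q₁, …, Q_k`. -/
def stackedMatrix {k n : ℕ} {m : Fin k → ℕ}
    (Q : ∀ i, Matrix (Fin (m i)) (Fin n) ℝ) :
    Matrix (Σ i : Fin k, Fin (m i)) (Fin n) ℝ :=
  Matrix.of fun p l => Q p.1 p.2 l

set_option maxHeartbeats 1000000 in
/-- Lower-bound ingredient \eqref{QCxQinvQCxQ1N} of the paper: if each row of each `Q_i` has
squared norm `N`, then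
`Tr[(Q_a Q_aᵀ + η Q_b Q_bᵀ + C_Z)⁻¹ Q_a Q_aᵀ] ≤ ∑ᵢ N mᵢ / ((1+η) N + σᵢ²)`,
where `Q_a` stacks the `Q_i`, `Q_b = ⊕ᵢ Q_i` and `C_Z = ⊕ᵢ σᵢ² I`. -/
theorem stmt_8 {k n : ℕ} (hk : 1 ≤ k) (hn : 0 < n) (m : Fin k → ℕ) (hm : ∀ i, 0 < m i)
    (N η : ℝ) (hN : 0 < N) (hη : 0 ≤ η)
    (σ : Fin k → ℝ) (hσ : ∀ i, 0 < σ i)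
    (Q : ∀ i, Matrix (Fin (m i)) (Fin n) ℝ)
    (hrows : ∀ i (j : Fin (m i)), ∑ l, (Q i j l) ^ 2 = N) :
    Matrix.trace
        ((stackedMatrix Q * (stackedMatrix Q)ᵀ +
            η • (Matrix.blockDiagonal' Q * (Matrix.blockDiagonal' Q)ᵀ) +
            Matrix.diagonal (fun p : Σ i : Fin k, Fin (m i) => σ p.1 ^ 2))⁻¹ *
          (stackedMatrix Q * (stackedMatrix Q)ᵀ)) ≤
      ∑ i, N * (m i : ℝ) / ((1 + η) * N + σ i ^ 2) := by
  classical
  set Qa := stackedMatrix Q with hQa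
  set A := Qa * Qaᵀ with hA
  set G : ∀ i, Matrix (Fin (m i)) (Fin (m i)) ℝ := fun i => Q i * (Q i)ᵀ with hGdef
  have hGpsd : ∀ i, (G i).PosSemidef := by
    intro i
    have := posSemidef_self_mul_conjTranspose (Q i)
    rwa [conjTranspose_eq_transpose_of_trivial] at this
  have hGh : ∀ i, (G i).IsHermitian := fun i => (hGpsd i).1
  set lam : ∀ i, Fin (m i) → ℝ := fun i => (hGh i).eigenvalues with hlamdef
  have hlam0 : ∀ i j, 0 ≤ lam i j := fun i j => (hGpsd i).eigenvalues_nonneg j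
  set V : ∀ i, Matrix (Fin (m i)) (Fin (m i)) ℝ :=
    fun i => ((hGh i).eigenvectorUnitary : Matrix (Fin (m i)) (Fin (m i)) ℝ) with hVdef
  have hVG : ∀ i, (V i)ᵀ * G i * V i = diagonal (lam i) := by
    intro i
    have h := (hGh i).conjStarAlgAut_star_eigenvectorUnitary
    rw [Unitary.conjStarAlgAut_star_apply] at h
    rw [Matrix.star_eq_conjTranspose, conjTranspose_eq_transpose_of_trivial] at h
    simpa using h
  have hVV : ∀ i, (V i)ᵀ * V i = 1 := by
    intro i
    have h := (Matrix.mem_unitaryGroup_iff').mp ((hGh i).eigenvectorUnitary).2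
    rwa [Matrix.star_eq_conjTranspose, conjTranspose_eq_transpose_of_trivial] at h
  have hVV' : ∀ i, V i * (V i)ᵀ = 1 := by
    intro i
    have h := (Matrix.mem_unitaryGroup_iff).mp ((hGh i).eigenvectorUnitary).2
    rwa [Matrix.star_eq_conjTranspose, conjTranspose_eq_transpose_of_trivial] at h
  set B := blockDiagonal' Q * (blockDiagonal' Q)ᵀ with hB
  have hBG : B = blockDiagonal' G := by
    rw [hB, blockDiagonal'_transpose, ← blockDiagonal'_mul]
  set CZ := Matrix.diagonal (fun p : Σ i : Fin k, Fin (m i) => σ p.1 ^ 2) with hCZ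
  set M := A + η • B + CZ with hM
  set P := η • B + CZ with hP
  have hMP : M = A + P := by rw [hM, hP, add_assoc]
  set U : Matrix (Σ i : Fin k, Fin (m i)) (Σ i : Fin k, Fin (m i)) ℝ :=
    blockDiagonal' V with hU
  have hUt : Uᵀ = blockDiagonal' (fun i => (V i)ᵀ) := blockDiagonal'_transpose V
  have hUU : Uᵀ * U = 1 := by
    rw [hUt, hU, ← blockDiagonal'_mul]
    have h : (fun i => (V i)ᵀ * V i) = fun i : Fin k =>
        (1 : Matrix (Fin (m i)) (Fin (m i)) ℝ) := funext fun i => hVV i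
    rw [h]; exact blockDiagonal'_one
  have hUU' : U * Uᵀ = 1 := by
    rw [hUt, hU, ← blockDiagonal'_mul]
    have h : (fun i => V i * (V i)ᵀ) = fun i : Fin k =>
        (1 : Matrix (Fin (m i)) (Fin (m i)) ℝ) := funext fun i => hVV' i
    rw [h]; exact blockDiagonal'_one
  -- positivity
  have hApsd : A.PosSemidef := by
    rw [hA, ← conjTranspose_eq_transpose_of_trivial]
    exact posSemidef_self_mul_conjTranspose _
  have hBpsd : B.PosSemidef := by
    rw [hB, ← conjTranspose_eq_transpose_of_trivial]
    exact posSemidef_self_mul_conjTranspose _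
  have hsBpsd : (η • B).PosSemidef := by
    rw [posSemidef_iff_dotProduct_mulVec]
    refine ⟨?_, fun x => ?_⟩
    · show (η • B)ᴴ = η • B
      have hBH : Bᴴ = B := hBpsd.1
      rw [conjTranspose_smul, hBH]
      simp
    · rw [smul_mulVec, dotProduct_smul]
      exact smul_nonneg hη (hBpsd.dotProduct_mulVec_nonneg x)
  have hCpd : CZ.PosDef := Matrix.PosDef.diagonal fun p => pow_pos (hσ p.1) 2
  have hMpd : M.PosDef := by
    rw [hM]
    exact Matrix.PosDef.posSemidef_add (hApsd.add hsBpsd) hCpd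
  have hMdet : IsUnit M.det := (Matrix.isUnit_iff_isUnit_det _).mp hMpd.isUnit
  set d : (Σ i : Fin k, Fin (m i)) → ℝ := fun p => η * lam p.1 p.2 + σ p.1 ^ 2 with hd
  have hd0 : ∀ p, 0 ≤ d p := fun p => by
    have h1 := hlam0 p.1 p.2; have h2 := hσ p.1; positivity
  -- U^T P U = diagonal d
  have blocks : ∀ i, (V i)ᵀ * ((η • G i + diagonal (fun _ : Fin (m i) => σ i ^ 2)) * V i)
      = diagonal (fun j => η * lam i j + σ i ^ 2) := by
    intro i
    have hconst : diagonal (fun _ : Fin (m i) => σ i ^ 2)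
        = (σ i ^ 2) • (1 : Matrix (Fin (m i)) (Fin (m i)) ℝ) := by
      rw [smul_one_eq_diagonal]
    rw [hconst]
    rw [add_mul, Matrix.mul_add, smul_mul_assoc, Matrix.mul_smul, smul_mul_assoc,
      Matrix.mul_smul, Matrix.one_mul, hVV i, ← Matrix.mul_assoc, hVG i]
    ext j j'
    by_cases hjj : j = j'
    · subst hjj; simp [diagonal_apply_eq]
    · simp [diagonal_apply_ne _ hjj, hjj]
  have hUPU : Uᵀ * P * U = diagonal d := by
    have hPb : P = blockDiagonal' (fun i => η • G i + diagonal (fun _ : Fin (m i) => σ i ^ 2)) := by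
      have h1 : blockDiagonal' (fun i => η • G i + diagonal (fun _ : Fin (m i) => σ i ^ 2))
          = blockDiagonal' (fun i => η • G i)
            + blockDiagonal' (fun i => diagonal (fun _ : Fin (m i) => σ i ^ 2)) :=
        blockDiagonal'_add _ _
      have h2 : blockDiagonal' (fun i => η • G i) = η • blockDiagonal' G :=
        blockDiagonal'_smul η G
      have h3 : blockDiagonal' (fun i => diagonal (fun _ : Fin (m i) => σ i ^ 2)) = CZ :=
        blockDiagonal'_diagonal _
      rw [hP, hBG, h1, h2, h3]
    have h4 : Uᵀ * P * U
        = blockDiagonal' (fun i => (V i)ᵀ * ((η • G i + diagonal (fun _ : Fin (m i) => σ i ^ 2)) * V i)) := by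
      rw [hPb, hUt, hU, Matrix.mul_assoc, ← blockDiagonal'_mul, ← blockDiagonal'_mul]
    rw [h4]
    have h5 : (fun i => (V i)ᵀ * ((η • G i + diagonal (fun _ : Fin (m i) => σ i ^ 2)) * V i))
        = fun i => diagonal (fun j => η * lam i j + σ i ^ 2) := funext fun i => blocks i
    rw [h5, blockDiagonal'_diagonal]
  -- diagonal entries of U^T A U
  have hUAU : ∀ p : (Σ i : Fin k, Fin (m i)), (Uᵀ * A * U) p p = lam p.1 p.2 := by
    rintro ⟨i, j⟩
    have h1 : (Uᵀ * A * U) ⟨i, j⟩ ⟨i, j⟩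
        = (fun q => U q ⟨i, j⟩) ⬝ᵥ (A *ᵥ fun q => U q ⟨i, j⟩) := congr_diag A U ⟨i, j⟩
    have hz : Qaᵀ *ᵥ (fun q => U q ⟨i, j⟩) = (Q i)ᵀ *ᵥ (fun j' => V i j' j) := by
      funext l
      show ∑ q : (Σ i : Fin k, Fin (m i)), Qaᵀ l q * U q ⟨i, j⟩ = ∑ j', (Q i)ᵀ l j' * V i j' j
      rw [← Finset.univ_sigma_univ, Finset.sum_sigma]
      rw [Fintype.sum_eq_single i]
      · apply Finset.sum_congr rfl
        intro j' _
        congr 1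
        exact blockDiagonal'_apply_eq V i j' j
      · intro i' hi'
        apply Finset.sum_eq_zero
        intro j' _
        have : U ⟨i', j'⟩ ⟨i, j⟩ = 0 := blockDiagonal'_apply_ne V j' j hi'
        rw [this, mul_zero]
    calc (Uᵀ * A * U) ⟨i, j⟩ ⟨i, j⟩
        = ((Q i)ᵀ *ᵥ (fun j' => V i j' j)) ⬝ᵥ ((Q i)ᵀ *ᵥ (fun j' => V i j' j)) := by
          rw [h1, hA, quad_form, hz]
      _ = (fun j' => V i j' j) ⬝ᵥ (G i *ᵥ fun j' => V i j' j) := (quad_form (Q i) _).symm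
      _ = ((V i)ᵀ * G i * V i) j j := (congr_diag (G i) (V i) j).symm
      _ = lam i j := by rw [hVG i, diagonal_apply_eq]
  set S := Uᵀ * M * U with hS
  have hSpd : S.PosDef := by
    rw [posDef_iff_dotProduct_mulVec]
    constructor
    · have h := isHermitian_conjTranspose_mul_mul U hMpd.1
      rwa [conjTranspose_eq_transpose_of_trivial] at h
    · intro x hx
      have hUx : U *ᵥ x ≠ 0 := by
        intro h0
        apply hx
        have h1 : Uᵀ *ᵥ (U *ᵥ x) = (Uᵀ * U) *ᵥ x := mulVec_mulVec _ _ _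
        rw [hUU, one_mulVec] at h1
        rw [← h1, h0, mulVec_zero]
      have h := hMpd.dotProduct_mulVec_pos hUx
      show 0 < star x ⬝ᵥ ((Uᵀ * M * U) *ᵥ x)
      rw [← conjTranspose_eq_transpose_of_trivial U]
      simpa only [star_mulVec, dotProduct_mulVec, vecMul_vecMul] using h
  have hSdiag : ∀ p, S p p = (1 + η) * lam p.1 p.2 + σ p.1 ^ 2 := by
    intro p
    have h : S = Uᵀ * A * U + diagonal d := by
      rw [hS, hMP, ← hUPU]
      noncomm_ring
    rw [h]
    simp only [Matrix.add_apply, diagonal_apply_eq, hUAU p, hd]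
    ring
  have hSinv : S⁻¹ = Uᵀ * M⁻¹ * U := by
    refine Matrix.inv_eq_right_inv ?_
    calc S * (Uᵀ * M⁻¹ * U) = Uᵀ * (M * (U * Uᵀ) * M⁻¹) * U := by
          rw [hS]; noncomm_ring
      _ = 1 := by
          rw [hUU', Matrix.mul_one, Matrix.mul_nonsing_inv _ hMdet, Matrix.mul_one, hUU]
  -- trace identities
  have htr1 : Matrix.trace (M⁻¹ * A)
      = (Fintype.card (Σ i : Fin k, Fin (m i)) : ℝ) - Matrix.trace (M⁻¹ * P) := by
    have hAMP : A = M - P := eq_sub_of_add_eq hMP.symm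
    have h : M⁻¹ * A = 1 - M⁻¹ * P := by
      rw [hAMP, Matrix.mul_sub, Matrix.nonsing_inv_mul _ hMdet]
    rw [h, trace_sub, trace_one]
  have htr2 : Matrix.trace (M⁻¹ * P) = ∑ p, S⁻¹ p p * d p := by
    have hstep : S⁻¹ * (Uᵀ * P * U) = Uᵀ * (M⁻¹ * P) * U := by
      rw [hSinv]
      calc Uᵀ * M⁻¹ * U * (Uᵀ * P * U) = Uᵀ * M⁻¹ * (U * Uᵀ) * P * U := by noncomm_ring
        _ = Uᵀ * (M⁻¹ * P) * U := by rw [hUU']; noncomm_ring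
    have h : Matrix.trace (M⁻¹ * P) = Matrix.trace (S⁻¹ * diagonal d) := by
      rw [← hUPU, hstep, Matrix.trace_mul_cycle, hUU', Matrix.one_mul]
    rw [h]
    simp [Matrix.trace, Matrix.diag, Matrix.mul_diagonal]
  have hbound : ∀ p, d p / S p p ≤ S⁻¹ p p * d p := by
    intro p
    have h1 := inv_diag_ge hSpd p
    have hpos : 0 < S p p := by
      rw [hSdiag p]
      nlinarith [hlam0 p.1 p.2, hσ p.1, sq_nonneg (σ p.1)]
    rw [div_le_iff₀ hpos]
    have h2 : d p * 1 ≤ d p * (S p p * S⁻¹ p p) := mul_le_mul_of_nonneg_left h1 (hd0 p)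
    nlinarith [h2]
  -- assemble
  have key1 : Matrix.trace (M⁻¹ * A)
      ≤ ∑ p : (Σ i : Fin k, Fin (m i)), lam p.1 p.2 / ((1 + η) * lam p.1 p.2 + σ p.1 ^ 2) := by
    rw [htr1, htr2]
    have hcard : (Fintype.card (Σ i : Fin k, Fin (m i)) : ℝ)
        = ∑ _p : (Σ i : Fin k, Fin (m i)), (1 : ℝ) := by simp
    rw [hcard, ← Finset.sum_sub_distrib]
    apply Finset.sum_le_sum
    intro p _
    have hpos : 0 < (1 + η) * lam p.1 p.2 + σ p.1 ^ 2 := by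
      nlinarith [hlam0 p.1 p.2, hσ p.1, sq_nonneg (σ p.1)]
    have hb := hbound p
    rw [hSdiag p] at hb
    have heq : (1 : ℝ) - d p / ((1 + η) * lam p.1 p.2 + σ p.1 ^ 2)
        = lam p.1 p.2 / ((1 + η) * lam p.1 p.2 + σ p.1 ^ 2) := by
      rw [hd]
      have hne := hpos.ne'
      beta_reduce
      rw [eq_div_iff hne, sub_mul, div_mul_cancel₀ _ hne]
      ring
    linarith
  refine le_trans key1 ?_
  rw [← Finset.univ_sigma_univ, Finset.sum_sigma]
  apply Finset.sum_le_sum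
  intro i _
  have ha : (0 : ℝ) < 1 + η := by linarith
  have hb' : (0 : ℝ) < σ i ^ 2 := pow_pos (hσ i) 2
  have hsum : ∑ j, lam i j = N * m i := by
    have t1 : ∑ j, lam i j = Matrix.trace (diagonal (lam i)) := by
      rw [Matrix.trace_diagonal]
    rw [t1, ← hVG i, Matrix.trace_mul_cycle, hVV' i, Matrix.one_mul]
    have t2 : Matrix.trace (G i) = ∑ j, ∑ l, Q i j l * Q i j l := by
      rw [Matrix.trace]
      apply Finset.sum_congr rfl
      intro j _
      show (Q i * (Q i)ᵀ) j j = _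
      rw [mul_apply]
      exact Finset.sum_congr rfl fun l _ => by rw [transpose_apply]
    rw [t2]
    have t3 : ∀ j, ∑ l, Q i j l * Q i j l = N := by
      intro j
      rw [← hrows i j]
      exact Finset.sum_congr rfl fun l _ => (sq _).symm
    simp only [t3, Finset.sum_const, Finset.card_univ, Fintype.card_fin, nsmul_eq_mul]
    ring
  calc ∑ j, lam i j / ((1 + η) * lam i j + σ i ^ 2)
      ≤ ∑ j, (N / ((1 + η) * N + σ i ^ 2)
          + σ i ^ 2 / ((1 + η) * N + σ i ^ 2) ^ 2 * (lam i j - N)) :=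
        Finset.sum_le_sum fun j _ => tangent_line ha hb' (hlam0 i j) hN
    _ = N * m i / ((1 + η) * N + σ i ^ 2) := by
        rw [Finset.sum_add_distrib, Finset.sum_const, ← Finset.mul_sum,
          Finset.sum_sub_distrib, hsum, Finset.sum_const, Finset.card_univ, Fintype.card_fin]
        simp only [nsmul_eq_mul]
        ring
end

section
/- Let k ≥ 1 and N ≥ 1 be integers, let η > 0 and σ₁, …, σ_k > 0, and let m₁, …, m_k be positive integers. For each i let Q_i be a real m_i × 2N matrix such that for every l with 1 ≤ l ≤ N one has (Q_iᵀ Q_i)(l,l) + (Q_iᵀ Q_i)(N+l, N+l) = m_i. Let Λ be the k×k matrix with diagonal entries 1 + η and off-diagonal entries 1, and let Γ = Λ⁻¹. Then Tr[( ⊕_{i=1}^{k} (1/σ_i²) Q_iᵀ Q_i + Γ ⊗ I_{2N} )⁻¹] ≥ 2N · Tr[( Diag(m₁/(2σ₁²), …, m_k/(2σ_k²)) + Γ )⁻¹]. -/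
open Matrix
open scoped Kronecker
section Lemmas
variable {ι : Type*} [Fintype ι] [DecidableEq ι]

lemma psd_trace_nonneg {P : Matrix ι ι ℝ} (hP : P.PosSemidef) : 0 ≤ P.trace := by
  refine Finset.sum_nonneg fun i _ => ?_
  simpa using hP.dotProduct_mulVec_nonneg (Pi.single i 1)

lemma var_lower (M Y : Matrix ι ι ℝ) (hM : M.PosDef) (hY : Yᵀ = Y) :
    2 * Y.trace - (Y * M * Y).trace ≤ M⁻¹.trace := by
  have hdet : IsUnit M.det := hM.det_pos.ne'.isUnit
  have hMt : Mᵀ = M := hM.isHermitian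
  have hIt : (M⁻¹)ᵀ = M⁻¹ := by rw [Matrix.transpose_nonsing_inv, hMt]
  set Z := Y - M⁻¹ with hZdef
  have hZ : Zᴴ = Z := by
    rw [Matrix.conjTranspose_eq_transpose_of_trivial, hZdef, Matrix.transpose_sub, hY, hIt]
  have h2 : 0 ≤ (Z * M * Zᴴ).trace := psd_trace_nonneg (hM.posSemidef.mul_mul_conjTranspose_same Z)
  have hexp : Z * M * Zᴴ = Y * M * Y - Y - Y + M⁻¹ := by
    rw [hZ, hZdef]
    rw [Matrix.sub_mul, Matrix.mul_sub, Matrix.sub_mul, Matrix.sub_mul,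
      Matrix.mul_assoc Y M M⁻¹, Matrix.mul_nonsing_inv _ hdet, Matrix.mul_one,
      Matrix.nonsing_inv_mul _ hdet, Matrix.one_mul, Matrix.one_mul]
    abel
  rw [hexp] at h2
  simp only [Matrix.trace_add, Matrix.trace_sub] at h2
  linarith

lemma conj_posDef (M U : Matrix ι ι ℝ) (hM : M.PosDef) (hU : U * Uᵀ = 1) :
    (U * M * Uᵀ).PosDef := by
  have hU' : Uᵀ * U = 1 := mul_eq_one_comm.mp hU
  rw [Matrix.posDef_iff_dotProduct_mulVec]
  constructor
  · rw [← Matrix.conjTranspose_eq_transpose_of_trivial U]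
    exact Matrix.isHermitian_mul_mul_conjTranspose U hM.isHermitian
  · intro x hx
    have hne : Uᵀ *ᵥ x ≠ 0 := by
      intro h
      apply hx
      have : (U * Uᵀ) *ᵥ x = U *ᵥ (Uᵀ *ᵥ x) := by rw [Matrix.mulVec_mulVec]
      rw [hU, Matrix.one_mulVec, h, Matrix.mulVec_zero] at this
      exact this
    have key : x ⬝ᵥ ((U * M * Uᵀ) *ᵥ x) = (Uᵀ *ᵥ x) ⬝ᵥ (M *ᵥ (Uᵀ *ᵥ x)) := by
      rw [← Matrix.mulVec_mulVec, ← Matrix.mulVec_mulVec, Matrix.dotProduct_mulVec,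
        Matrix.mulVec_transpose]
    have h := hM.dotProduct_mulVec_pos hne
    rw [star_trivial] at h
    rw [star_trivial, key]
    exact h

lemma conj_trace_inv (M U : Matrix ι ι ℝ) (hM : M.PosDef) (hU : U * Uᵀ = 1) :
    ((U * M * Uᵀ)⁻¹).trace = M⁻¹.trace := by
  have hU' : Uᵀ * U = 1 := mul_eq_one_comm.mp hU
  have hdet : IsUnit M.det := hM.det_pos.ne'.isUnit
  have hinv : (U * M * Uᵀ)⁻¹ = U * M⁻¹ * Uᵀ := by
    apply Matrix.inv_eq_right_inv
    calc U * M * Uᵀ * (U * M⁻¹ * Uᵀ) = U * M * (Uᵀ * U) * M⁻¹ * Uᵀ := by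
          simp only [Matrix.mul_assoc]
      _ = 1 := by
          rw [hU', Matrix.mul_one, Matrix.mul_assoc U M M⁻¹, Matrix.mul_nonsing_inv _ hdet,
            Matrix.mul_one, hU]
  rw [hinv, Matrix.trace_mul_comm (U * M⁻¹) Uᵀ, ← Matrix.mul_assoc, hU', Matrix.one_mul]


/-- sign of a boolean -/
def sgn (b : Bool) : ℝ := if b then 1 else -1

lemma sgn_mul_self (b : Bool) : sgn b * sgn b = 1 := by cases b <;> norm_num [sgn]

/-- signed permutation matrix -/
def Vmat (π : Equiv.Perm ι) (ε : ι → Bool) : Matrix ι ι ℝ :=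
  Matrix.of fun x y => if π y = x then sgn (ε x) else 0

lemma Vmat_mul_transpose (π : Equiv.Perm ι) (ε : ι → Bool) :
    Vmat π ε * (Vmat π ε)ᵀ = 1 := by
  ext x y
  rw [Matrix.mul_apply]
  rw [Finset.sum_eq_single (π.symm x)]
  · simp only [Vmat, Matrix.transpose_apply, Matrix.of_apply, Equiv.apply_symm_apply, if_pos rfl]
    by_cases h : x = y
    · subst h; simp [sgn_mul_self]
    · simp [h, Ne.symm h, Matrix.one_apply]
  · intro u _ hu
    have : π u ≠ x := fun h => hu (by simp [← h])
    simp [Vmat, this]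
  · simp

lemma Vmat_conj_apply (π : Equiv.Perm ι) (ε : ι → Bool) (A : Matrix ι ι ℝ) (x y : ι) :
    (Vmat π ε * A * (Vmat π ε)ᵀ) x y = sgn (ε x) * sgn (ε y) * A (π.symm x) (π.symm y) := by
  rw [Matrix.mul_apply]
  have hrow : ∀ v, (Vmat π ε * A) x v = sgn (ε x) * A (π.symm x) v := by
    intro v
    rw [Matrix.mul_apply, Finset.sum_eq_single (π.symm x)]
    · simp [Vmat]
    · intro u _ hu
      have : π u ≠ x := fun h => hu (by simp [← h])
      simp [Vmat, this]
    · simp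
  simp_rw [hrow]
  rw [Finset.sum_eq_single (π.symm y)]
  · simp only [Vmat, Matrix.transpose_apply, Matrix.of_apply, Equiv.apply_symm_apply, if_pos rfl,
      eq_self_iff_true, if_true]
    ring
  · intro v _ hv
    have : π v ≠ y := fun h => hv (by simp [← h])
    simp [Vmat, this]
  · simp

lemma sign_sum_ne {x y : ι} (h : x ≠ y) :
    ∑ ε : ι → Bool, sgn (ε x) * sgn (ε y) = 0 := by
  apply Finset.sum_ninvolution (fun ε => Function.update ε x (!ε x))
  · intro ε
    have hx : Function.update ε x (!ε x) x = !ε x := Function.update_self x _ ε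
    have hy : Function.update ε x (!ε x) y = ε y := Function.update_of_ne (Ne.symm h) _ ε
    rw [hx, hy]
    cases ε x <;> cases ε y <;> norm_num [sgn]
  · intro ε _
    intro hc
    have := congrFun hc x
    rw [Function.update_self] at this
    cases hhh : ε x <;> rw [hhh] at this <;> simp at this
  · intro ε; exact Finset.mem_univ _
  · intro ε
    funext z
    by_cases hz : z = x
    · subst hz; simp
    · simp [Function.update_of_ne hz]

lemma perm_sum_const (f : ι → ℝ) (x y : ι) :
    ∑ π : Equiv.Perm ι, f (π x) = ∑ π : Equiv.Perm ι, f (π y) := by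
  exact Fintype.sum_bijective (fun π => π * Equiv.swap x y)
    (Group.mulRight_bijective _) _ _
    (fun π => by simp [Equiv.Perm.mul_apply, Equiv.swap_apply_right])

lemma perm_sum (f : ι → ℝ) (x : ι) :
    (Fintype.card ι : ℝ) * ∑ π : Equiv.Perm ι, f (π x)
      = (Fintype.card (Equiv.Perm ι) : ℝ) * ∑ u, f u := by
  have h1 : (Fintype.card ι : ℝ) * ∑ π : Equiv.Perm ι, f (π x)
      = ∑ _y : ι, ∑ π : Equiv.Perm ι, f (π x) := by
    rw [Finset.sum_const, nsmul_eq_mul, Finset.card_univ]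
  rw [h1]
  have h2 : ∀ y : ι, y ∈ Finset.univ → (∑ π : Equiv.Perm ι, f (π x)) = ∑ π : Equiv.Perm ι, f (π y) :=
    fun y _ => perm_sum_const f x y
  rw [Finset.sum_congr rfl h2, Finset.sum_comm]
  have h3 : ∀ π : Equiv.Perm ι, (∑ y : ι, f (π y)) = ∑ u, f u := fun π => Equiv.sum_comp π f
  rw [Finset.sum_congr rfl (fun π _ => h3 π), Finset.sum_const, nsmul_eq_mul, Finset.card_univ]


lemma block_sum (A : Matrix ι ι ℝ) (d : ℝ) (hd : A.trace = (Fintype.card ι : ℝ) * d) :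
    ∑ π : Equiv.Perm ι, ∑ ε : ι → Bool, Vmat π ε * A * (Vmat π ε)ᵀ
      = ((Fintype.card (Equiv.Perm ι) : ℝ) * 2 ^ (Fintype.card ι)) • (d • (1 : Matrix ι ι ℝ)) := by
  ext x y
  have hcard : (Fintype.card (ι → Bool) : ℝ) = 2 ^ (Fintype.card ι) := by
    rw [Fintype.card_fun, Fintype.card_bool]; push_cast; ring
  simp only [Matrix.sum_apply, Vmat_conj_apply, Matrix.smul_apply, smul_eq_mul]
  by_cases hxy : x = y
  · subst hxy
    have step1 : ∀ π : Equiv.Perm ι,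
        (∑ ε : ι → Bool, sgn (ε x) * sgn (ε x) * A (π.symm x) (π.symm x))
          = (2 ^ (Fintype.card ι) : ℝ) * A (π.symm x) (π.symm x) := by
      intro π
      rw [Finset.sum_congr rfl
        (fun (ε : ι → Bool) _ => by rw [sgn_mul_self, one_mul] :
          ∀ ε ∈ Finset.univ, sgn (ε x) * sgn (ε x) * A (π.symm x) (π.symm x)
            = A (π.symm x) (π.symm x)),
        Finset.sum_const, nsmul_eq_mul, Finset.card_univ, hcard]
    rw [Finset.sum_congr rfl (fun π _ => step1 π), ← Finset.mul_sum]
    have step2 : (∑ π : Equiv.Perm ι, A (π.symm x) (π.symm x))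
        = ∑ π : Equiv.Perm ι, A (π x) (π x) :=
      Fintype.sum_bijective (fun π => π⁻¹) (Equiv.inv (Equiv.Perm ι)).bijective
        _ _ (fun π => rfl)
    have hn0 : (Fintype.card ι : ℝ) ≠ 0 := by
      have : 0 < Fintype.card ι := Fintype.card_pos_iff.mpr ⟨x⟩
      positivity
    have step3 : (∑ π : Equiv.Perm ι, A (π x) (π x))
        = (Fintype.card (Equiv.Perm ι) : ℝ) * d := by
      have := perm_sum (fun u => A u u) x
      rw [show (∑ u, A u u) = A.trace from rfl, hd] at this
      exact mul_left_cancel₀ hn0 (this.trans (by ring))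
    rw [step2, step3, Matrix.one_apply_eq]
    ring
  · have step1 : ∀ π : Equiv.Perm ι,
        (∑ ε : ι → Bool, sgn (ε x) * sgn (ε y) * A (π.symm x) (π.symm y)) = 0 := by
      intro π
      rw [← Finset.sum_mul, sign_sum_ne hxy, zero_mul]
    rw [Finset.sum_congr rfl (fun π _ => step1 π), Finset.sum_const, smul_zero,
      Matrix.one_apply_ne hxy]
    ring


variable {κ : Type*} [Fintype κ] [DecidableEq κ]

/-- block diagonal matrix with blocks `B i` -/
def blk (B : κ → Matrix ι ι ℝ) : Matrix (κ × ι) (κ × ι) ℝ :=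
  Matrix.of fun p q => if p.1 = q.1 then B p.1 p.2 q.2 else 0

lemma blk_eq_sum (B : κ → Matrix ι ι ℝ) :
    blk B = ∑ i, Matrix.single i i (1:ℝ) ⊗ₖ B i := by
  ext p q
  rw [Matrix.sum_apply]
  rw [Finset.sum_eq_single p.1]
  · by_cases h : p.1 = q.1 <;>
      simp [blk, Matrix.single, h]
  · intro i _ hi
    simp only [Matrix.kroneckerMap_apply, Matrix.single, Matrix.of_apply]
    rw [if_neg (fun hc => hi hc.1), zero_mul]
  · simp

lemma conj_blk (W : Matrix ι ι ℝ) (B : κ → Matrix ι ι ℝ) :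
    ((1 : Matrix κ κ ℝ) ⊗ₖ W) * blk B * ((1 : Matrix κ κ ℝ) ⊗ₖ W)ᵀ
      = blk (fun i => W * B i * Wᵀ) := by
  have ht : ((1 : Matrix κ κ ℝ) ⊗ₖ W)ᵀ = (1 : Matrix κ κ ℝ) ⊗ₖ Wᵀ := by
    rw [← Matrix.kroneckerMap_transpose, Matrix.transpose_one]
  rw [ht, blk_eq_sum, blk_eq_sum (fun i => W * B i * Wᵀ), Finset.mul_sum, Finset.sum_mul]
  refine Finset.sum_congr rfl fun i _ => ?_
  rw [← Matrix.mul_kronecker_mul, ← Matrix.mul_kronecker_mul, Matrix.one_mul, Matrix.mul_one]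

lemma diagonal_kron_one (d : κ → ℝ) :
    (Matrix.diagonal d) ⊗ₖ (1 : Matrix ι ι ℝ) = blk (fun i => d i • (1 : Matrix ι ι ℝ)) := by
  ext p q
  simp only [Matrix.kroneckerMap_apply, Matrix.diagonal_apply, blk, Matrix.of_apply,
    Matrix.smul_apply, smul_eq_mul]
  by_cases h : p.1 = q.1 <;> simp [h]

lemma blk_mulVec (B : κ → Matrix ι ι ℝ) (x : κ × ι → ℝ) (p : κ × ι) :
    (blk B *ᵥ x) p = ((B p.1) *ᵥ (fun a => x (p.1, a))) p.2 := by
  simp only [Matrix.mulVec, dotProduct, Fintype.sum_prod_type, blk, Matrix.of_apply]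
  rw [Finset.sum_eq_single p.1]
  · simp
  · intro i _ hi
    simp [Ne.symm hi]
  · simp

lemma blk_posSemidef (B : κ → Matrix ι ι ℝ) (hB : ∀ i, (B i).PosSemidef) :
    (blk B).PosSemidef := by
  rw [Matrix.posSemidef_iff_dotProduct_mulVec]
  constructor
  · ext p q
    simp only [Matrix.conjTranspose_apply, blk, Matrix.of_apply, star_trivial]
    by_cases h : p.1 = q.1
    · rw [if_pos h.symm, if_pos h, h]
      have := (hB q.1).isHermitian
      calc B q.1 q.2 p.2 = (B q.1)ᴴ p.2 q.2 := by
            rw [Matrix.conjTranspose_apply, star_trivial]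
        _ = B q.1 p.2 q.2 := by rw [this]
    · rw [if_neg (fun hh => h hh.symm), if_neg h]
  · intro x
    have hsum : star x ⬝ᵥ (blk B *ᵥ x)
        = ∑ i, ((fun a => x (i, a)) ⬝ᵥ (B i) *ᵥ (fun a => x (i, a))) := by
      simp only [star_trivial, dotProduct, Fintype.sum_prod_type, blk_mulVec]
    rw [hsum]
    refine Finset.sum_nonneg fun i _ => ?_
    simpa using (hB i).dotProduct_mulVec_nonneg (fun a => x (i, a))

lemma kron_one_mulVec (B : Matrix κ κ ℝ) (x : κ × ι → ℝ) (p : κ × ι) :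
    ((B ⊗ₖ (1 : Matrix ι ι ℝ)) *ᵥ x) p = (B *ᵥ (fun j => x (j, p.2))) p.1 := by
  simp only [Matrix.mulVec, dotProduct, Fintype.sum_prod_type, Matrix.kroneckerMap_apply,
    Matrix.one_apply, mul_ite, mul_one, mul_zero, ite_mul, zero_mul, Finset.sum_ite_eq,
    Finset.mem_univ, if_true]

lemma kron_one_posDef (B : Matrix κ κ ℝ) (hB : B.PosDef) :
    (B ⊗ₖ (1 : Matrix ι ι ℝ)).PosDef := by
  rw [Matrix.posDef_iff_dotProduct_mulVec]
  constructor
  · show _ = _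
    rw [Matrix.conjTranspose_eq_transpose_of_trivial, ← Matrix.kroneckerMap_transpose,
      Matrix.transpose_one]
    congr 1
    rw [← Matrix.conjTranspose_eq_transpose_of_trivial, hB.isHermitian]
  · intro x hx
    have hsum : star x ⬝ᵥ ((B ⊗ₖ (1 : Matrix ι ι ℝ)) *ᵥ x)
        = ∑ a : ι, ((fun j => x (j, a)) ⬝ᵥ B *ᵥ (fun j => x (j, a))) := by
      simp only [star_trivial, dotProduct, Fintype.sum_prod_type, kron_one_mulVec]
      exact Finset.sum_comm
    rw [hsum]
    obtain ⟨p, hp⟩ := Function.ne_iff.mp hx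
    refine Finset.sum_pos' (fun a _ => by simpa using hB.posSemidef.dotProduct_mulVec_nonneg (fun j => x (j, a)))
      ⟨p.2, Finset.mem_univ _, ?_⟩
    have hne : (fun j => x (j, p.2)) ≠ 0 := by
      intro hc
      exact hp (congrFun hc p.1)
    simpa using hB.dotProduct_mulVec_pos hne


lemma kron_sum_right {α : Type*} (s : Finset α) (A : Matrix κ κ ℝ) (C : α → Matrix ι ι ℝ) :
    ∑ a ∈ s, A ⊗ₖ C a = A ⊗ₖ (∑ a ∈ s, C a) := by
  ext p q
  simp only [Matrix.sum_apply, Matrix.kroneckerMap_apply, ← Finset.mul_sum]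

lemma one_kron_transpose (W : Matrix ι ι ℝ) :
    ((1 : Matrix κ κ ℝ) ⊗ₖ W)ᵀ = (1 : Matrix κ κ ℝ) ⊗ₖ Wᵀ := by
  rw [← Matrix.kroneckerMap_transpose, Matrix.transpose_one]

lemma one_kron_orth {W : Matrix ι ι ℝ} (hW : W * Wᵀ = 1) :
    ((1 : Matrix κ κ ℝ) ⊗ₖ W) * ((1 : Matrix κ κ ℝ) ⊗ₖ W)ᵀ = 1 := by
  rw [one_kron_transpose, ← Matrix.mul_kronecker_mul, Matrix.one_mul, hW,
    Matrix.one_kronecker_one]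

lemma one_kron_conj_kron (Γ : Matrix κ κ ℝ) {W : Matrix ι ι ℝ} (hW : W * Wᵀ = 1) :
    ((1 : Matrix κ κ ℝ) ⊗ₖ W) * (Γ ⊗ₖ (1 : Matrix ι ι ℝ)) * ((1 : Matrix κ κ ℝ) ⊗ₖ W)ᵀ
      = Γ ⊗ₖ (1 : Matrix ι ι ℝ) := by
  rw [one_kron_transpose, ← Matrix.mul_kronecker_mul, ← Matrix.mul_kronecker_mul,
    Matrix.one_mul, Matrix.mul_one, Matrix.mul_one, hW]

lemma conj_blk' (W : Matrix ι ι ℝ) (B : κ → Matrix ι ι ℝ) :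
    ((1 : Matrix κ κ ℝ) ⊗ₖ W) * blk B * ((1 : Matrix κ κ ℝ) ⊗ₖ W)ᵀ
      = blk (fun i => W * B i * Wᵀ) :=
  conj_blk W B

lemma matrix_inv_one : (1 : Matrix ι ι ℝ)⁻¹ = 1 :=
  Matrix.inv_eq_right_inv (by rw [Matrix.one_mul])

end Lemmas

/-- The block diagonal matrix `⊕ᵢ (1/σᵢ²) Qᵢᵀ Qᵢ`, indexed consistently with the Kronecker
product `Γ ⊗ I_{2N}` (here the `2N` coordinates are modelled by `Fin N ⊕ Fin N`). -/
noncomputable def blockDirectSum {k N : ℕ} {m : Fin k → ℕ} (σ : Fin k → ℝ)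
    (Q : ∀ i, Matrix (Fin (m i)) (Fin N ⊕ Fin N) ℝ) :
    Matrix (Fin k × (Fin N ⊕ Fin N)) (Fin k × (Fin N ⊕ Fin N)) ℝ :=
  Matrix.of fun p q =>
    if p.1 = q.1 then (σ p.1 ^ 2)⁻¹ * ((Q p.1)ᵀ * Q p.1) p.2 q.2 else 0

/-- Lower bound \eqref{Dblowerupper} of the paper: if for every `i` and every `l ≤ N` the
`l`-th and `(N+l)`-th diagonal entries of `Qᵢᵀ Qᵢ` add up to `mᵢ`, then (with `Γ = Λ⁻¹`)
`Tr[(⊕ᵢ (1/σᵢ²) Qᵢᵀ Qᵢ + Γ ⊗ I_{2N})⁻¹] ≥ 2N · Tr[(Diag(mᵢ/(2σᵢ²)) + Γ)⁻¹]`. -/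
theorem stmt_10 {k N : ℕ} (hk : 1 ≤ k) (hN : 1 ≤ N)
    (η : ℝ) (hη : 0 < η) (σ : Fin k → ℝ) (hσ : ∀ i, 0 < σ i)
    (m : Fin k → ℕ) (hm : ∀ i, 0 < m i)
    (Q : ∀ i, Matrix (Fin (m i)) (Fin N ⊕ Fin N) ℝ)
    (hdiag : ∀ i (l : Fin N),
      ((Q i)ᵀ * Q i) (Sum.inl l) (Sum.inl l) + ((Q i)ᵀ * Q i) (Sum.inr l) (Sum.inr l)
        = (m i : ℝ))
    (Λ : Matrix (Fin k) (Fin k) ℝ)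
    (hΛ : ∀ i j : Fin k, Λ i j = if i = j then 1 + η else 1) :
    Matrix.trace
        ((blockDirectSum σ Q + Λ⁻¹ ⊗ₖ (1 : Matrix (Fin N ⊕ Fin N) (Fin N ⊕ Fin N) ℝ))⁻¹) ≥
      (2 * N : ℝ) *
        Matrix.trace ((Matrix.diagonal (fun i => (m i : ℝ) / (2 * σ i ^ 2)) + Λ⁻¹)⁻¹) := by
  classical
  set A : Fin k → Matrix (Fin N ⊕ Fin N) (Fin N ⊕ Fin N) ℝ :=
    fun i => (σ i ^ 2)⁻¹ • ((Q i)ᵀ * Q i) with hA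
  set d : Fin k → ℝ := fun i => (m i : ℝ) / (2 * σ i ^ 2) with hd
  have hDblk : blockDirectSum σ Q = blk A := by
    ext p q
    simp [blockDirectSum, blk, hA, Matrix.smul_apply, smul_eq_mul]
  rw [ge_iff_le, hDblk]
  have hQht : ∀ i, (Q i)ᵀ = (Q i)ᴴ :=
    fun i => (Matrix.conjTranspose_eq_transpose_of_trivial _).symm
  -- positivity facts
  have hΛPD : Λ.PosDef := by
    rw [Matrix.posDef_iff_dotProduct_mulVec]
    constructor
    · ext i j
      simp only [Matrix.conjTranspose_apply, star_trivial, hΛ]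
      by_cases h : i = j <;> simp [h, eq_comm]
    · intro x hx
      have hq : star x ⬝ᵥ Λ *ᵥ x = (∑ i, x i)^2 + η * ∑ i, (x i)^2 := by
        simp only [star_trivial, dotProduct, Matrix.mulVec, hΛ]
        have h1 : ∀ i : Fin k, (∑ j, (if i = j then (1+η) else 1) * x j)
            = (∑ j, x j) + η * x i := by
          intro i
          have h0 : ∀ j ∈ Finset.univ, (if i = j then (1+η) else 1) * x j
              = x j + (if i = j then η * x j else 0) := by
            intro j _; split <;> ring
          rw [Finset.sum_congr rfl h0, Finset.sum_add_distrib, Finset.sum_ite_eq]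
          simp
        rw [Finset.sum_congr rfl (fun i _ => by rw [h1 i])]
        have h2 : ∀ i ∈ Finset.univ, x i * ((∑ j, x j) + η * x i)
            = x i * (∑ j, x j) + η * (x i)^2 := fun i _ => by ring
        rw [Finset.sum_congr rfl h2, Finset.sum_add_distrib, ← Finset.sum_mul, ← Finset.mul_sum]
        ring
      rw [hq]
      obtain ⟨i, hi⟩ := Function.ne_iff.mp hx
      have hpos : 0 < ∑ i, (x i)^2 :=
        Finset.sum_pos' (fun j _ => sq_nonneg _)
          ⟨i, Finset.mem_univ _, lt_of_le_of_ne (sq_nonneg _) (Ne.symm (pow_ne_zero 2 hi))⟩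
      exact add_pos_of_nonneg_of_pos (sq_nonneg _) (mul_pos hη hpos)
  have hΓPD : (Λ⁻¹).PosDef := hΛPD.inv
  have hApsd : ∀ i, (A i).PosSemidef := by
    intro i
    have base := Matrix.posSemidef_conjTranspose_mul_self (Q i)
    have hc : (0:ℝ) ≤ (σ i ^ 2)⁻¹ := by positivity
    rw [Matrix.posSemidef_iff_dotProduct_mulVec]
    constructor
    · show (A i)ᴴ = A i
      rw [hA]
      simp only
      rw [hQht i, Matrix.conjTranspose_smul, star_trivial, base.1]
    · intro x
      have hb := base.dotProduct_mulVec_nonneg x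
      rw [hA]
      simp only [Matrix.smul_mulVec, dotProduct_smul, smul_eq_mul]
      rw [hQht i]
      exact mul_nonneg hc hb
  have hcardι : (Fintype.card (Fin N ⊕ Fin N) : ℝ) = (N : ℝ) + (N : ℝ) := by
    simp [Fintype.card_sum, Fintype.card_fin]
  have hATr : ∀ i, (A i).trace = (Fintype.card (Fin N ⊕ Fin N) : ℝ) * d i := by
    intro i
    have htr : ((Q i)ᵀ * Q i).trace = (N : ℝ) * (m i : ℝ) := by
      rw [Matrix.trace]
      rw [show (∑ x : Fin N ⊕ Fin N, ((Q i)ᵀ * Q i).diag x)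
          = ∑ l : Fin N, (((Q i)ᵀ * Q i) (Sum.inl l) (Sum.inl l)
            + ((Q i)ᵀ * Q i) (Sum.inr l) (Sum.inr l)) from by
        rw [Fintype.sum_sum_type, ← Finset.sum_add_distrib]; rfl]
      rw [Finset.sum_congr rfl (fun l _ => hdiag i l),
        Finset.sum_const, nsmul_eq_mul, Finset.card_univ, Fintype.card_fin]
    rw [hA]
    simp only
    rw [Matrix.trace_smul, htr, hcardι, hd, smul_eq_mul]
    have hσ0 : (σ i : ℝ) ≠ 0 := (hσ i).ne'
    field_simp
    ring
  have hd0 : ∀ i, 0 ≤ d i := by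
    intro i; rw [hd]; positivity
  -- big matrices
  set M : Matrix ((Fin k) × (Fin N ⊕ Fin N)) ((Fin k) × (Fin N ⊕ Fin N)) ℝ :=
    blk A + Λ⁻¹ ⊗ₖ 1 with hMdef
  set G : Matrix (Fin k) (Fin k) ℝ := Matrix.diagonal d + Λ⁻¹ with hGdef
  have hMPD : M.PosDef :=
    Matrix.PosDef.posSemidef_add (blk_posSemidef A hApsd) (kron_one_posDef _ hΓPD)
  have hGPD : G.PosDef :=
    Matrix.PosDef.posSemidef_add (Matrix.PosSemidef.diagonal hd0) hΓPD
  set Mb : Matrix ((Fin k) × (Fin N ⊕ Fin N)) ((Fin k) × (Fin N ⊕ Fin N)) ℝ :=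
    G ⊗ₖ 1 with hMbdef
  have hMbPD : Mb.PosDef := kron_one_posDef _ hGPD
  have hMbdet : IsUnit Mb.det := hMbPD.det_pos.ne'.isUnit
  set Y : Matrix ((Fin k) × (Fin N ⊕ Fin N)) ((Fin k) × (Fin N ⊕ Fin N)) ℝ := Mb⁻¹ with hYdef
  have hYsym : Yᵀ = Y := by
    rw [hYdef, ← Matrix.conjTranspose_eq_transpose_of_trivial]
    exact hMbPD.inv.isHermitian
  -- orthogonality of the conjugating family
  have hUorth : ∀ (π : Equiv.Perm (Fin N ⊕ Fin N)) (ε : (Fin N ⊕ Fin N) → Bool),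
      ((1 : Matrix (Fin k) (Fin k) ℝ) ⊗ₖ Vmat π ε)
        * ((1 : Matrix (Fin k) (Fin k) ℝ) ⊗ₖ Vmat π ε)ᵀ = 1 :=
    fun π ε => one_kron_orth (Vmat_mul_transpose π ε)
  have key : ∀ (π : Equiv.Perm (Fin N ⊕ Fin N)) (ε : (Fin N ⊕ Fin N) → Bool),
      2 * Y.trace - (Y * (((1 : Matrix (Fin k) (Fin k) ℝ) ⊗ₖ Vmat π ε) * M
        * ((1 : Matrix (Fin k) (Fin k) ℝ) ⊗ₖ Vmat π ε)ᵀ) * Y).trace ≤ M⁻¹.trace := by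
    intro π ε
    rw [← conj_trace_inv M _ hMPD (hUorth π ε)]
    exact var_lower _ Y (conj_posDef M _ hMPD (hUorth π ε)) hYsym
  -- the averaging identity
  set c : ℝ := (Fintype.card (Equiv.Perm (Fin N ⊕ Fin N)) : ℝ)
      * 2 ^ (Fintype.card (Fin N ⊕ Fin N)) with hc
  have hcfun : (Fintype.card ((Fin N ⊕ Fin N) → Bool) : ℝ)
      = 2 ^ (Fintype.card (Fin N ⊕ Fin N)) := by
    rw [Fintype.card_fun, Fintype.card_bool]
    push_cast; ring
  have hcpos : 0 < c := by
    rw [hc]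
    have h1 : (0:ℝ) < (Fintype.card (Equiv.Perm (Fin N ⊕ Fin N)) : ℝ) := by
      exact_mod_cast Fintype.card_pos
    positivity
  have hconst : ∀ (z : ℝ), (∑ _π : Equiv.Perm (Fin N ⊕ Fin N),
      ∑ _ε : (Fin N ⊕ Fin N) → Bool, z) = c * z := by
    intro z
    rw [Finset.sum_const, Finset.sum_const, Finset.card_univ, Finset.card_univ,
      ← Nat.cast_smul_eq_nsmul ℝ (Fintype.card ((Fin N ⊕ Fin N) → Bool)),
      ← Nat.cast_smul_eq_nsmul ℝ (Fintype.card (Equiv.Perm (Fin N ⊕ Fin N))),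
      smul_smul, hcfun, hc, smul_eq_mul]
  have hsumconj : ∑ π : Equiv.Perm (Fin N ⊕ Fin N), ∑ ε : (Fin N ⊕ Fin N) → Bool,
      ((1 : Matrix (Fin k) (Fin k) ℝ) ⊗ₖ Vmat π ε) * M
        * ((1 : Matrix (Fin k) (Fin k) ℝ) ⊗ₖ Vmat π ε)ᵀ = c • Mb := by
    have hsplit : ∀ (π : Equiv.Perm (Fin N ⊕ Fin N)) (ε : (Fin N ⊕ Fin N) → Bool),
        ((1 : Matrix (Fin k) (Fin k) ℝ) ⊗ₖ Vmat π ε) * M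
          * ((1 : Matrix (Fin k) (Fin k) ℝ) ⊗ₖ Vmat π ε)ᵀ
        = blk (fun i => Vmat π ε * A i * (Vmat π ε)ᵀ)
          + (Λ⁻¹ : Matrix (Fin k) (Fin k) ℝ) ⊗ₖ 1 := by
      intro π ε
      rw [hMdef, Matrix.mul_add, Matrix.add_mul, conj_blk',
        one_kron_conj_kron _ (Vmat_mul_transpose π ε)]
    rw [Finset.sum_congr rfl (fun π _ => Finset.sum_congr rfl (fun ε _ => hsplit π ε))]
    have hblkpart : ∑ π : Equiv.Perm (Fin N ⊕ Fin N), ∑ ε : (Fin N ⊕ Fin N) → Bool,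
        blk (fun i => Vmat π ε * A i * (Vmat π ε)ᵀ)
        = c • ((Matrix.diagonal d) ⊗ₖ (1 : Matrix (Fin N ⊕ Fin N) (Fin N ⊕ Fin N) ℝ)) := by
      have hstep : ∀ (π : Equiv.Perm (Fin N ⊕ Fin N)) (ε : (Fin N ⊕ Fin N) → Bool),
          blk (fun i => Vmat π ε * A i * (Vmat π ε)ᵀ)
          = ∑ i, Matrix.single i i (1:ℝ) ⊗ₖ (Vmat π ε * A i * (Vmat π ε)ᵀ) :=
        fun π ε => blk_eq_sum _
      rw [Finset.sum_congr rfl (fun π _ => Finset.sum_congr rfl (fun ε _ => hstep π ε))]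
      rw [Finset.sum_congr rfl (fun π _ => Finset.sum_comm), Finset.sum_comm]
      have hinner : ∀ i : Fin k,
          (∑ π : Equiv.Perm (Fin N ⊕ Fin N), ∑ ε : (Fin N ⊕ Fin N) → Bool,
            Matrix.single i i (1:ℝ) ⊗ₖ (Vmat π ε * A i * (Vmat π ε)ᵀ))
          = c • (Matrix.single i i (1:ℝ)
              ⊗ₖ (d i • (1 : Matrix (Fin N ⊕ Fin N) (Fin N ⊕ Fin N) ℝ))) := by
        intro i
        rw [Finset.sum_congr rfl (fun π _ => kron_sum_right _ _ _), kron_sum_right,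
          block_sum (A i) (d i) (hATr i), Matrix.kronecker_smul, hc]
      rw [Finset.sum_congr rfl (fun i _ => hinner i), ← Finset.smul_sum]
      congr 1
      rw [← blk_eq_sum, diagonal_kron_one]
    have hgampart : ∑ π : Equiv.Perm (Fin N ⊕ Fin N), ∑ ε : (Fin N ⊕ Fin N) → Bool,
        ((Λ⁻¹ : Matrix (Fin k) (Fin k) ℝ) ⊗ₖ (1 : Matrix (Fin N ⊕ Fin N) (Fin N ⊕ Fin N) ℝ))
        = c • ((Λ⁻¹ : Matrix (Fin k) (Fin k) ℝ) ⊗ₖ 1) := by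
      rw [Finset.sum_const, Finset.sum_const, Finset.card_univ, Finset.card_univ,
        ← Nat.cast_smul_eq_nsmul ℝ (Fintype.card ((Fin N ⊕ Fin N) → Bool)),
        ← Nat.cast_smul_eq_nsmul ℝ (Fintype.card (Equiv.Perm (Fin N ⊕ Fin N))),
        smul_smul, hcfun, hc]
    rw [Finset.sum_congr rfl (fun π _ => Finset.sum_add_distrib), Finset.sum_add_distrib,
      hblkpart, hgampart, ← smul_add, hMbdef, hGdef, Matrix.add_kronecker]
  -- summing the per-element inequality
  have h2 : ∑ π : Equiv.Perm (Fin N ⊕ Fin N), ∑ ε : (Fin N ⊕ Fin N) → Bool,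
      (Y * (((1 : Matrix (Fin k) (Fin k) ℝ) ⊗ₖ Vmat π ε) * M
        * ((1 : Matrix (Fin k) (Fin k) ℝ) ⊗ₖ Vmat π ε)ᵀ) * Y).trace = c * Y.trace := by
    rw [Finset.sum_congr rfl (fun π _ => (Matrix.trace_sum _ _).symm), ← Matrix.trace_sum]
    have hs : ∑ π : Equiv.Perm (Fin N ⊕ Fin N), ∑ ε : (Fin N ⊕ Fin N) → Bool,
        Y * (((1 : Matrix (Fin k) (Fin k) ℝ) ⊗ₖ Vmat π ε) * M
          * ((1 : Matrix (Fin k) (Fin k) ℝ) ⊗ₖ Vmat π ε)ᵀ) * Y = Y * (c • Mb) * Y := by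
      rw [← hsumconj, Finset.mul_sum, Finset.sum_mul]
      refine Finset.sum_congr rfl fun π _ => ?_
      rw [Finset.mul_sum, Finset.sum_mul]
    rw [hs, Matrix.mul_smul, Matrix.smul_mul, Matrix.trace_smul, smul_eq_mul]
    congr 1
    rw [hYdef, Matrix.nonsing_inv_mul _ hMbdet, Matrix.one_mul]
  have h1 : ∑ π : Equiv.Perm (Fin N ⊕ Fin N), ∑ ε : (Fin N ⊕ Fin N) → Bool,
      (2 * Y.trace - (Y * (((1 : Matrix (Fin k) (Fin k) ℝ) ⊗ₖ Vmat π ε) * M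
        * ((1 : Matrix (Fin k) (Fin k) ℝ) ⊗ₖ Vmat π ε)ᵀ) * Y).trace)
      ≤ ∑ π : Equiv.Perm (Fin N ⊕ Fin N), ∑ ε : (Fin N ⊕ Fin N) → Bool, M⁻¹.trace :=
    Finset.sum_le_sum fun π _ => Finset.sum_le_sum fun ε _ => key π ε
  rw [Finset.sum_congr rfl (fun π _ => Finset.sum_sub_distrib _ _), Finset.sum_sub_distrib,
    hconst, h2, hconst] at h1
  have hfinal : Mb⁻¹.trace ≤ M⁻¹.trace := by
    have h3 : c * Mb⁻¹.trace ≤ c * M⁻¹.trace := by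
      have he : c * (2 * Y.trace) - c * Y.trace = c * Mb⁻¹.trace := by
        rw [hYdef]; ring
      rw [he] at h1
      exact h1
    exact le_of_mul_le_mul_left h3 hcpos
  refine le_trans ?_ hfinal
  rw [hMbdef, Matrix.inv_kronecker, matrix_inv_one, Matrix.trace_kronecker, Matrix.trace_one,
    hcardι]
  exact le_of_eq (by ring)
end

section
/- Let k ≥ 1 and N ≥ 1 be integers, let η > 0 and σ₁, …, σ_k > 0, and let m₁, …, m_k be positive integers. For each i let Q_i be a real m_i × 2N matrix such that for every l with 1 ≤ l ≤ N one has (Q_iᵀ Q_i)(l,l) + (Q_iᵀ Q_i)(N+l, N+l) = m_i. Then Tr[( I_{2N} + ∑_{i=1}^{k} Q_iᵀ (η Q_i Q_iᵀ + σ_i² I_{m_i})⁻¹ Q_i )⁻¹] ≥ 2N / ( (1 + k/η) − (k²/η) · ( k + η ∑_{i=1}^{k} m_i/(2σ_i²) )⁻¹ ). -/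
open Matrix


open Matrix

namespace Stmt11Aux

variable {n : Type*} [Fintype n] [DecidableEq n]

lemma smul_posSemidef {A : Matrix n n ℝ} (hA : A.PosSemidef) {c : ℝ} (hc : 0 ≤ c) :
    (c • A).PosSemidef := by
  refine PosSemidef.of_dotProduct_mulVec_nonneg ?_ fun x => ?_
  · show (c • A)ᴴ = c • A
    rw [conjTranspose_smul, star_trivial, hA.1.eq]
  · rw [smul_mulVec, dotProduct_smul, smul_eq_mul]
    exact mul_nonneg hc (hA.dotProduct_mulVec_nonneg x)

lemma smul_one_posDef {c : ℝ} (hc : 0 < c) :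
    (c • (1 : Matrix n n ℝ)).PosDef := by
  rw [smul_one_eq_diagonal]
  exact Matrix.PosDef.diagonal fun _ => hc

lemma trace_nonneg' {A : Matrix n n ℝ} (hA : A.PosSemidef) : 0 ≤ A.trace := by
  have h : ∀ i, 0 ≤ A i i := fun i => by
    simpa [Matrix.mulVec_single, single_dotProduct] using hA.dotProduct_mulVec_nonneg (Pi.single i 1)
  exact Finset.sum_nonneg fun i _ => h i

lemma trace_inv_ge {A : Matrix n n ℝ} (hA : A.PosDef) (c : ℝ) :
    2 * c * (Fintype.card n : ℝ) - c ^ 2 * A.trace ≤ (A⁻¹).trace := by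
  have hdet : IsUnit A.det := hA.det_pos.ne'.isUnit
  have h1 : A * A⁻¹ = 1 := mul_nonsing_inv A hdet
  have h2 : A⁻¹ * A = 1 := nonsing_inv_mul A hdet
  have hpsd : ((c • A - 1) * A⁻¹ * (c • A - 1)ᴴ).PosSemidef :=
    hA.inv.posSemidef.mul_mul_conjTranspose_same _
  have hct : (c • A - 1)ᴴ = c • A - 1 := by
    rw [conjTranspose_sub, conjTranspose_smul, conjTranspose_one, star_trivial, hA.1.eq]
  rw [hct] at hpsd
  have hexp : (c • A - 1) * A⁻¹ * (c • A - 1) = (c * c) • A - c • 1 - c • 1 + A⁻¹ := by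
    have e1 : (c • A - 1) * A⁻¹ = c • (1 : Matrix n n ℝ) - A⁻¹ := by
      rw [sub_mul, smul_mul_assoc, h1, one_mul]
    rw [e1, sub_mul, smul_mul_assoc, one_mul, mul_sub, mul_smul_comm, h2, mul_one,
      smul_sub, smul_smul]
    abel
  have h0 := trace_nonneg' hpsd
  rw [hexp] at h0
  simp only [trace_add, trace_sub, trace_smul, trace_one, smul_eq_mul] at h0
  nlinarith [h0]

variable {p q : Type*} [Fintype p] [Fintype q] [DecidableEq p] [DecidableEq q]

lemma inv_mul_eq (Q : Matrix p q ℝ) (η c : ℝ)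
    (hM : (η • (Q * Qᵀ) + c • (1 : Matrix p p ℝ)).PosDef)
    (hW : (η • (Qᵀ * Q) + c • (1 : Matrix q q ℝ)).PosDef) :
    (η • (Q * Qᵀ) + c • 1)⁻¹ * Q = Q * (η • (Qᵀ * Q) + c • 1)⁻¹ := by
  have hcomm : (η • (Q * Qᵀ) + c • (1 : Matrix p p ℝ)) * Q
      = Q * (η • (Qᵀ * Q) + c • (1 : Matrix q q ℝ)) := by
    rw [Matrix.add_mul, Matrix.mul_add, Matrix.smul_mul, Matrix.mul_smul, Matrix.smul_mul,
      Matrix.mul_smul, Matrix.one_mul, Matrix.mul_one, Matrix.mul_assoc]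
  have hMdet : IsUnit (η • (Q * Qᵀ) + c • (1 : Matrix p p ℝ)).det := hM.det_pos.ne'.isUnit
  have hWdet : IsUnit (η • (Qᵀ * Q) + c • (1 : Matrix q q ℝ)).det := hW.det_pos.ne'.isUnit
  set M := η • (Q * Qᵀ) + c • (1 : Matrix p p ℝ)
  set W := η • (Qᵀ * Q) + c • (1 : Matrix q q ℝ)
  calc M⁻¹ * Q = M⁻¹ * (Q * (W * W⁻¹)) := by rw [mul_nonsing_inv _ hWdet, Matrix.mul_one]
    _ = M⁻¹ * M * (Q * W⁻¹) := by
        rw [← Matrix.mul_assoc Q W, ← hcomm]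
        simp only [Matrix.mul_assoc]
    _ = Q * W⁻¹ := by rw [nonsing_inv_mul _ hMdet, Matrix.one_mul]

lemma trace_QMQ (Q : Matrix p q ℝ) (η c : ℝ) (hη : η ≠ 0)
    (hM : (η • (Q * Qᵀ) + c • (1 : Matrix p p ℝ)).PosDef)
    (hW : (η • (Qᵀ * Q) + c • (1 : Matrix q q ℝ)).PosDef) :
    (Qᵀ * (η • (Q * Qᵀ) + c • (1 : Matrix p p ℝ))⁻¹ * Q).trace
      = η⁻¹ * ((Fintype.card q : ℝ)
          - c * ((η • (Qᵀ * Q) + c • (1 : Matrix q q ℝ))⁻¹).trace) := by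
  have hWdet : IsUnit (η • (Qᵀ * Q) + c • (1 : Matrix q q ℝ)).det := hW.det_pos.ne'.isUnit
  have hmat : Qᵀ * (η • (Q * Qᵀ) + c • (1 : Matrix p p ℝ))⁻¹ * Q
      = η⁻¹ • ((1 : Matrix q q ℝ) - c • (η • (Qᵀ * Q) + c • (1 : Matrix q q ℝ))⁻¹) := by
    rw [Matrix.mul_assoc, inv_mul_eq Q η c hM hW, ← Matrix.mul_assoc]
    have hQQ : Qᵀ * Q = η⁻¹ • ((η • (Qᵀ * Q) + c • (1 : Matrix q q ℝ)) - c • (1 : Matrix q q ℝ)) := by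
      rw [add_sub_cancel_right, smul_smul, inv_mul_cancel₀ hη, one_smul]
    nth_rewrite 1 [hQQ]
    rw [Matrix.smul_mul, Matrix.sub_mul, mul_nonsing_inv _ hWdet, Matrix.smul_mul,
      Matrix.one_mul]
  rw [hmat, trace_smul, trace_sub, trace_smul, trace_one, smul_eq_mul, smul_eq_mul]

end Stmt11Aux

set_option maxHeartbeats 1600000 in
/-- Lower bound \eqref{m1minimizesD} of the paper: if for every `i` and every `l ≤ N` the
`l`-th and `(N+l)`-th diagonal entries of `Qᵢᵀ Qᵢ` add up to `mᵢ` (the `2N` coordinates are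
modelled by `Fin N ⊕ Fin N`), then
`Tr[(I + ∑ᵢ Qᵢᵀ (η Qᵢ Qᵢᵀ + σᵢ² I)⁻¹ Qᵢ)⁻¹]
  ≥ 2N / ((1 + k/η) − (k²/η) (k + η ∑ᵢ mᵢ/(2σᵢ²))⁻¹)`. -/
theorem stmt_11 {k N : ℕ} (hk : 1 ≤ k) (hN : 1 ≤ N)
    (η : ℝ) (hη : 0 < η) (σ : Fin k → ℝ) (hσ : ∀ i, 0 < σ i)
    (m : Fin k → ℕ) (hm : ∀ i, 0 < m i)
    (Q : ∀ i, Matrix (Fin (m i)) (Fin N ⊕ Fin N) ℝ)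
    (hdiag : ∀ i (l : Fin N),
      ((Q i)ᵀ * Q i) (Sum.inl l) (Sum.inl l) + ((Q i)ᵀ * Q i) (Sum.inr l) (Sum.inr l)
        = (m i : ℝ)) :
    Matrix.trace
        ((1 + ∑ i, (Q i)ᵀ * (η • (Q i * (Q i)ᵀ) + σ i ^ 2 • (1 : Matrix (Fin (m i)) (Fin (m i)) ℝ))⁻¹ * Q i)⁻¹) ≥
      (2 * N : ℝ) /
        ((1 + (k : ℝ) / η) -
          ((k : ℝ) ^ 2 / η) * ((k : ℝ) + η * ∑ i, (m i : ℝ) / (2 * σ i ^ 2))⁻¹) := by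
  classical
  have hη' : η ≠ 0 := ne_of_gt hη
  have hσ2 : ∀ i, (0:ℝ) < σ i ^ 2 := fun i => pow_pos (hσ i) 2
  have hmpos : ∀ i, (0:ℝ) < (m i : ℝ) := fun i => by exact_mod_cast hm i
  have hNpos : (0:ℝ) < (N : ℝ) := by exact_mod_cast hN
  -- positive definiteness of the inner matrices
  have hMpd : ∀ i, (η • (Q i * (Q i)ᵀ) + σ i ^ 2 • (1 : Matrix (Fin (m i)) (Fin (m i)) ℝ)).PosDef := by
    intro i
    have h := Matrix.posSemidef_self_mul_conjTranspose (Q i)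
    rw [Matrix.conjTranspose_eq_transpose_of_trivial] at h
    exact Matrix.PosDef.posSemidef_add (Stmt11Aux.smul_posSemidef h hη.le)
      (Stmt11Aux.smul_one_posDef (hσ2 i))
  have hWpd : ∀ i, (η • ((Q i)ᵀ * Q i) + σ i ^ 2 • (1 : Matrix (Fin N ⊕ Fin N) (Fin N ⊕ Fin N) ℝ)).PosDef := by
    intro i
    have h := Matrix.posSemidef_conjTranspose_mul_self (Q i)
    rw [Matrix.conjTranspose_eq_transpose_of_trivial] at h
    exact Matrix.PosDef.posSemidef_add (Stmt11Aux.smul_posSemidef h hη.le)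
      (Stmt11Aux.smul_one_posDef (hσ2 i))
  have hcard : (Fintype.card (Fin N ⊕ Fin N) : ℝ) = 2 * N := by
    simp [Fintype.card_sum]; ring
  -- trace of QᵀQ
  have htrQQ : ∀ i, ((Q i)ᵀ * Q i).trace = (N : ℝ) * m i := by
    intro i
    have h1 : ((Q i)ᵀ * Q i).trace
        = ∑ l : Fin N, (((Q i)ᵀ * Q i) (Sum.inl l) (Sum.inl l)
            + ((Q i)ᵀ * Q i) (Sum.inr l) (Sum.inr l)) := by
      simp [Matrix.trace, Matrix.diag, Fintype.sum_sum_type, Finset.sum_add_distrib]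
    rw [h1]
    simp [hdiag i, Finset.sum_const, mul_comm]
  -- trace of W i
  have htrW : ∀ i, (η • ((Q i)ᵀ * Q i) + σ i ^ 2 • (1 : Matrix (Fin N ⊕ Fin N) (Fin N ⊕ Fin N) ℝ)).trace
      = 2 * N * (η * m i / 2 + σ i ^ 2) := by
    intro i
    rw [Matrix.trace_add, Matrix.trace_smul, Matrix.trace_smul, Matrix.trace_one, htrQQ i,
      smul_eq_mul, smul_eq_mul, hcard]
    ring
  -- lower bound for trace of W i ⁻¹
  have htrWinv : ∀ i, 2 * N * (η * m i / 2 + σ i ^ 2)⁻¹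
      ≤ ((η • ((Q i)ᵀ * Q i) + σ i ^ 2 • (1 : Matrix (Fin N ⊕ Fin N) (Fin N ⊕ Fin N) ℝ))⁻¹).trace := by
    intro i
    have hd : (0:ℝ) < η * m i / 2 + σ i ^ 2 :=
      add_pos_of_nonneg_of_pos (div_nonneg (mul_nonneg hη.le (hmpos i).le) two_pos.le) (hσ2 i)
    have h := Stmt11Aux.trace_inv_ge (hWpd i) (η * m i / 2 + σ i ^ 2)⁻¹
    rw [hcard, htrW i] at h
    have hcancel : (η * (m i:ℝ) / 2 + σ i ^ 2)⁻¹ * (η * m i / 2 + σ i ^ 2) = 1 :=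
      inv_mul_cancel₀ hd.ne'
    have heq : 2 * ((η * (m i:ℝ) / 2 + σ i ^ 2)⁻¹) * (2 * N)
        - ((η * (m i:ℝ) / 2 + σ i ^ 2)⁻¹) ^ 2 * (2 * N * (η * m i / 2 + σ i ^ 2))
        = 2 * N * (η * m i / 2 + σ i ^ 2)⁻¹ := by
      linear_combination (-(2 * (N:ℝ) * (η * (m i:ℝ) / 2 + σ i ^ 2)⁻¹)) * hcancel
    linarith [h, heq.ge, heq.le]
  -- upper bound on the trace of each summand
  have htle : ∀ i, ((Q i)ᵀ * (η • (Q i * (Q i)ᵀ) + σ i ^ 2 • (1 : Matrix (Fin (m i)) (Fin (m i)) ℝ))⁻¹ * Q i).trace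
      ≤ 2 * N * (m i / (η * m i + 2 * σ i ^ 2)) := by
    intro i
    rw [Stmt11Aux.trace_QMQ (Q i) η (σ i ^ 2) hη' (hMpd i) (hWpd i), hcard]
    have hWi := htrWinv i
    have hd : (0:ℝ) < η * m i / 2 + σ i ^ 2 :=
      add_pos_of_nonneg_of_pos (div_nonneg (mul_nonneg hη.le (hmpos i).le) two_pos.le) (hσ2 i)
    have hd2 : (0:ℝ) < η * m i + 2 * σ i ^ 2 :=
      add_pos_of_nonneg_of_pos (mul_nonneg hη.le (hmpos i).le) (mul_pos two_pos (hσ2 i))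
    have hd0 : (η * (m i:ℝ) / 2 + σ i ^ 2) ≠ 0 := hd.ne'
    have hd20 : (η * (m i:ℝ) + 2 * σ i ^ 2) ≠ 0 := hd2.ne'
    have hc3 : (η * (m i:ℝ) + 2 * σ i ^ 2) * (η * (m i:ℝ) + 2 * σ i ^ 2)⁻¹ = 1 :=
      mul_inv_cancel₀ hd20
    have he : η * η⁻¹ = 1 := mul_inv_cancel₀ hη'
    have hinv2 : (η * (m i:ℝ) / 2 + σ i ^ 2)⁻¹ = 2 * (η * (m i:ℝ) + 2 * σ i ^ 2)⁻¹ := by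
      have hmul : (η * (m i:ℝ) / 2 + σ i ^ 2) * (2 * (η * (m i:ℝ) + 2 * σ i ^ 2)⁻¹) = 1 := by
        linear_combination hc3
      exact (eq_inv_of_mul_eq_one_right hmul).symm
    have hstep : η⁻¹ * (2 * (N:ℝ) - σ i ^ 2 * (2 * N * (η * m i / 2 + σ i ^ 2)⁻¹))
        = 2 * N * (m i / (η * m i + 2 * σ i ^ 2)) := by
      rw [hinv2]
      linear_combination (-(2 * (N:ℝ) * η⁻¹)) * hc3
        + (2 * (N:ℝ) * (m i:ℝ) * (η * (m i:ℝ) + 2 * σ i ^ 2)⁻¹) * he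
    have hmono : η⁻¹ * (2 * (N:ℝ) - σ i ^ 2 * ((η • ((Q i)ᵀ * Q i) + σ i ^ 2 • (1 : Matrix (Fin N ⊕ Fin N) (Fin N ⊕ Fin N) ℝ))⁻¹).trace)
        ≤ η⁻¹ * (2 * (N:ℝ) - σ i ^ 2 * (2 * N * (η * m i / 2 + σ i ^ 2)⁻¹)) := by
      have h1 := mul_le_mul_of_nonneg_left hWi (hσ2 i).le
      have h2 : (0:ℝ) ≤ η⁻¹ := by positivity
      have h3 := sub_le_sub_left h1 (2 * (N:ℝ))
      exact mul_le_mul_of_nonneg_left h3 h2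
    linarith [hmono, hstep.le]
  -- the sum is positive semidefinite
  have hBpsd : (∑ i, (Q i)ᵀ * (η • (Q i * (Q i)ᵀ) + σ i ^ 2 • (1 : Matrix (Fin (m i)) (Fin (m i)) ℝ))⁻¹ * Q i).PosSemidef := by
    have hterm : ∀ i, ((Q i)ᵀ * (η • (Q i * (Q i)ᵀ) + σ i ^ 2 • (1 : Matrix (Fin (m i)) (Fin (m i)) ℝ))⁻¹ * Q i).PosSemidef := by
      intro i
      have h := ((hMpd i).inv.posSemidef).conjTranspose_mul_mul_same (Q i)
      rwa [Matrix.conjTranspose_eq_transpose_of_trivial] at h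
    exact Finset.sum_induction _ _ (fun a b ha hb => ha.add hb) Matrix.PosSemidef.zero
      fun i _ => hterm i
  -- the big matrix is positive definite
  have hApd : ((1 : Matrix (Fin N ⊕ Fin N) (Fin N ⊕ Fin N) ℝ)
      + ∑ i, (Q i)ᵀ * (η • (Q i * (Q i)ᵀ) + σ i ^ 2 • (1 : Matrix (Fin (m i)) (Fin (m i)) ℝ))⁻¹ * Q i).PosDef :=
    Matrix.PosDef.add_posSemidef Matrix.PosDef.one hBpsd
  -- scalar abbreviations
  set s' : ℝ := ∑ i, (m i : ℝ) / (η * m i + 2 * σ i ^ 2) with hs'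
  have hs'nonneg : 0 ≤ s' := Finset.sum_nonneg fun i _ =>
    div_nonneg (hmpos i).le
      (add_pos_of_nonneg_of_pos (mul_nonneg hη.le (hmpos i).le) (mul_pos two_pos (hσ2 i))).le
  set S : ℝ := ∑ i, (m i : ℝ) / (2 * σ i ^ 2) with hS
  have hSnonneg : 0 ≤ S := Finset.sum_nonneg fun i _ =>
    div_nonneg (hmpos i).le (mul_pos two_pos (hσ2 i)).le
  have h1s : (0:ℝ) < 1 + s' := by linarith
  -- trace of A
  have htrA : ((1 : Matrix (Fin N ⊕ Fin N) (Fin N ⊕ Fin N) ℝ)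
      + ∑ i, (Q i)ᵀ * (η • (Q i * (Q i)ᵀ) + σ i ^ 2 • (1 : Matrix (Fin (m i)) (Fin (m i)) ℝ))⁻¹ * Q i).trace
      ≤ 2 * N * (1 + s') := by
    rw [Matrix.trace_add, Matrix.trace_one, hcard, Matrix.trace_sum]
    have hsum : ∑ i, ((Q i)ᵀ * (η • (Q i * (Q i)ᵀ) + σ i ^ 2 • (1 : Matrix (Fin (m i)) (Fin (m i)) ℝ))⁻¹ * Q i).trace
        ≤ ∑ i, 2 * (N:ℝ) * ((m i : ℝ) / (η * m i + 2 * σ i ^ 2)) :=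
      Finset.sum_le_sum fun i _ => htle i
    rw [← Finset.mul_sum, ← hs'] at hsum
    have hexp : 2 * (N:ℝ) * (1 + s') = 2 * N + 2 * N * s' := by ring
    linarith [hsum, hexp.ge]
  -- main trace lower bound
  have hmain : 2 * (N:ℝ) / (1 + s')
      ≤ ((1 + ∑ i, (Q i)ᵀ * (η • (Q i * (Q i)ᵀ) + σ i ^ 2 • (1 : Matrix (Fin (m i)) (Fin (m i)) ℝ))⁻¹ * Q i)⁻¹).trace := by
    have h := Stmt11Aux.trace_inv_ge hApd (1 + s')⁻¹
    rw [hcard] at h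
    have hsq : ((1 + s')⁻¹) ^ 2 * ((1 : Matrix (Fin N ⊕ Fin N) (Fin N ⊕ Fin N) ℝ)
        + ∑ i, (Q i)ᵀ * (η • (Q i * (Q i)ᵀ) + σ i ^ 2 • (1 : Matrix (Fin (m i)) (Fin (m i)) ℝ))⁻¹ * Q i).trace
        ≤ ((1 + s')⁻¹) ^ 2 * (2 * N * (1 + s')) :=
      mul_le_mul_of_nonneg_left htrA (by positivity)
    have hcancel : (1 + s')⁻¹ * (1 + s') = 1 := inv_mul_cancel₀ h1s.ne'
    have heq : 2 * ((1 + s')⁻¹) * (2 * (N:ℝ)) - ((1 + s')⁻¹) ^ 2 * (2 * N * (1 + s'))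
        = 2 * N / (1 + s') := by
      rw [div_eq_mul_inv]
      linear_combination (-(2 * (N:ℝ) * (1 + s')⁻¹)) * hcancel
    linarith [h, hsq, heq.ge, heq.le]
  -- scalar inequality: 1 + s' ≤ D
  have hkpos : (0:ℝ) < (k:ℝ) := by exact_mod_cast hk
  have hden : (0:ℝ) < (k:ℝ) + η * S :=
    add_pos_of_pos_of_nonneg hkpos (mul_nonneg hη.le hSnonneg)
  have hAMHM : (k:ℝ) ^ 2 ≤ ((k:ℝ) + η * S) * ∑ i, (1 + η * ((m i : ℝ) / (2 * σ i ^ 2)))⁻¹ := by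
    have hx : ∀ i : Fin k, (0:ℝ) < 1 + η * ((m i : ℝ) / (2 * σ i ^ 2)) := fun i =>
      add_pos_of_pos_of_nonneg one_pos
        (mul_nonneg hη.le (div_nonneg (hmpos i).le (mul_pos two_pos (hσ2 i)).le))
    have hcs := Finset.sum_sq_le_sum_mul_sum_of_sq_eq_mul (Finset.univ : Finset (Fin k))
      (f := fun i => 1 + η * ((m i : ℝ) / (2 * σ i ^ 2)))
      (g := fun i => (1 + η * ((m i : ℝ) / (2 * σ i ^ 2)))⁻¹)
      (r := fun _ => (1:ℝ))
      (fun i _ => (hx i).le) (fun i _ => inv_nonneg.mpr (hx i).le)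
      (fun i _ => by rw [one_pow, mul_inv_cancel₀ (hx i).ne'])
    simp only [Finset.sum_const, Finset.card_univ, Fintype.card_fin, nsmul_eq_mul, mul_one] at hcs
    have hsumf : ∑ i, (1 + η * ((m i : ℝ) / (2 * σ i ^ 2))) = (k:ℝ) + η * S := by
      rw [Finset.sum_add_distrib, Finset.sum_const, Finset.card_univ, Fintype.card_fin,
        ← Finset.mul_sum, ← hS]
      simp [nsmul_eq_mul]
    rw [hsumf] at hcs
    exact_mod_cast hcs
  have hetag : ∀ i : Fin k, η * ((m i : ℝ) / (η * m i + 2 * σ i ^ 2))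
      = 1 - (1 + η * ((m i : ℝ) / (2 * σ i ^ 2)))⁻¹ := by
    intro i
    have h2 : (0:ℝ) < 2 * σ i ^ 2 := mul_pos two_pos (hσ2 i)
    have h1 : (0:ℝ) < η * m i + 2 * σ i ^ 2 :=
      add_pos_of_nonneg_of_pos (mul_nonneg hη.le (hmpos i).le) h2
    have hu : (η * (m i:ℝ) + 2 * σ i ^ 2) * (η * (m i:ℝ) + 2 * σ i ^ 2)⁻¹ = 1 :=
      mul_inv_cancel₀ h1.ne'
    have hv : (2 * σ i ^ 2) * (2 * σ i ^ 2)⁻¹ = 1 := mul_inv_cancel₀ h2.ne'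
    have hprod : (1 - η * ((m i:ℝ) / (η * m i + 2 * σ i ^ 2)))
        * (1 + η * ((m i : ℝ) / (2 * σ i ^ 2))) = 1 := by
      linear_combination (-(η * (m i:ℝ) * (2 * σ i ^ 2)⁻¹)) * hu
        + (η * (m i:ℝ) * (η * (m i:ℝ) + 2 * σ i ^ 2)⁻¹) * hv
    rw [inv_eq_of_mul_eq_one_left hprod]
    ring
  have hs'le : η * s' ≤ (k:ℝ) - (k:ℝ)^2 / ((k:ℝ) + η * S) := by
    have hrw : η * s' = (k:ℝ) - ∑ i, (1 + η * ((m i : ℝ) / (2 * σ i ^ 2)))⁻¹ := by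
      rw [hs', Finset.mul_sum]
      rw [Finset.sum_congr rfl fun i _ => hetag i]
      rw [Finset.sum_sub_distrib, Finset.sum_const, Finset.card_univ, Fintype.card_fin]
      simp [nsmul_eq_mul]
    rw [hrw]
    have h2 : (k:ℝ)^2 / ((k:ℝ) + η * S) ≤ ∑ i, (1 + η * ((m i : ℝ) / (2 * σ i ^ 2)))⁻¹ :=
      (div_le_iff₀ hden).mpr (by linarith [hAMHM])
    linarith
  have hDge : 1 + s' ≤ (1 + (k : ℝ) / η) - ((k : ℝ) ^ 2 / η) * ((k:ℝ) + η * S)⁻¹ := by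
    have h1 : s' ≤ ((k:ℝ) - (k:ℝ)^2 / ((k:ℝ) + η * S)) / η := by
      rw [le_div_iff₀ hη]
      linarith [hs'le]
    have h2 : ((k:ℝ) - (k:ℝ)^2 / ((k:ℝ) + η * S)) / η
        = (k : ℝ) / η - ((k : ℝ) ^ 2 / η) * ((k:ℝ) + η * S)⁻¹ := by
      ring
    linarith [h1, h2.le, h2.ge]
  -- conclude
  have hfinal : (2 * N : ℝ) / ((1 + (k : ℝ) / η) - ((k : ℝ) ^ 2 / η) * ((k:ℝ) + η * S)⁻¹)
      ≤ 2 * (N:ℝ) / (1 + s') :=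
    div_le_div_of_nonneg_left (by positivity) h1s hDge
  exact le_trans hfinal hmain
end

section
/- Let k ≥ 1, let η > 0 and σ₁, …, σ_k > 0, and for each i let Q_i be a real m_i × n matrix. Then, in the Loewner order on n×n real symmetric matrices, ∑_{i=1}^{k} Q_iᵀ (η Q_i Q_iᵀ + σ_i² I_{m_i})⁻¹ Q_i ≼ (1/η) · ( k I_n − k² ( ∑_{i=1}^{k} ( (η/σ_i²) Q_iᵀ Q_i + I_n ) )⁻¹ ). -/
open Matrix

section Aux

variable {N : ℕ}

lemma psd_smul {A : Matrix (Fin N) (Fin N) ℝ} (hA : A.PosSemidef) {c : ℝ} (hc : 0 ≤ c) :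
    (c • A).PosSemidef := by
  refine posSemidef_iff_dotProduct_mulVec.mpr ⟨?_, fun x => ?_⟩
  · unfold Matrix.IsHermitian
    rw [conjTranspose_smul, hA.1.eq]
    simp
  · rw [smul_mulVec, dotProduct_smul]
    exact mul_nonneg hc ((posSemidef_iff_dotProduct_mulVec.mp hA).2 x)

lemma pd_smul {A : Matrix (Fin N) (Fin N) ℝ} (hA : A.PosDef) {c : ℝ} (hc : 0 < c) :
    (c • A).PosDef := by
  refine posDef_iff_dotProduct_mulVec.mpr ⟨?_, fun x hx => ?_⟩
  · unfold Matrix.IsHermitian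
    rw [conjTranspose_smul, hA.1.eq]
    simp
  · rw [smul_mulVec, dotProduct_smul]
    exact mul_pos hc ((posDef_iff_dotProduct_mulVec.mp hA).2 hx)

lemma sum_mulVec' {ι : Type*} (s : Finset ι) (B : ι → Matrix (Fin N) (Fin N) ℝ)
    (x : Fin N → ℝ) : (∑ i ∈ s, B i) *ᵥ x = ∑ i ∈ s, (B i) *ᵥ x := by
  classical
  induction s using Finset.induction with
  | empty => simp
  | insert _ _ h ih => simp [Finset.sum_insert h, Matrix.add_mulVec, ih]

lemma dotProduct_sum' (v : Fin N → ℝ) {ι : Type*} (s : Finset ι) (w : ι → Fin N → ℝ) :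
    v ⬝ᵥ (∑ i ∈ s, w i) = ∑ i ∈ s, v ⬝ᵥ w i := by
  classical
  induction s using Finset.induction with
  | empty => simp
  | insert _ _ h ih => simp [Finset.sum_insert h, dotProduct_add, ih]

lemma psd_sum {ι : Type*} (s : Finset ι) (B : ι → Matrix (Fin N) (Fin N) ℝ)
    (hB : ∀ i ∈ s, (B i).PosSemidef) : (∑ i ∈ s, B i).PosSemidef := by
  refine posSemidef_iff_dotProduct_mulVec.mpr ⟨?_, fun x => ?_⟩
  · unfold Matrix.IsHermitian
    rw [conjTranspose_sum]
    exact Finset.sum_congr rfl fun i hi => (hB i hi).1.eq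
  · rw [sum_mulVec', dotProduct_sum']
    exact Finset.sum_nonneg fun i hi => (posSemidef_iff_dotProduct_mulVec.mp (hB i hi)).2 x

lemma pd_sum {ι : Type*} [Fintype ι] [Nonempty ι] (B : ι → Matrix (Fin N) (Fin N) ℝ)
    (hB : ∀ i, (B i).PosDef) : (∑ i, B i).PosDef := by
  refine posDef_iff_dotProduct_mulVec.mpr ⟨?_, fun x hx => ?_⟩
  · unfold Matrix.IsHermitian
    rw [conjTranspose_sum]
    exact Finset.sum_congr rfl fun i _ => (hB i).1.eq
  · rw [sum_mulVec', dotProduct_sum']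
    exact Finset.sum_pos (fun i _ => (posDef_iff_dotProduct_mulVec.mp (hB i)).2 hx) Finset.univ_nonempty

/-- Push-through identity. -/
lemma push {M : ℕ} (η : ℝ) (hη : 0 < η) (s : ℝ) (hs : 0 < s)
    (Q : Matrix (Fin M) (Fin N) ℝ) :
    Qᵀ * (η • (Q * Qᵀ) + s ^ 2 • (1 : Matrix (Fin M) (Fin M) ℝ))⁻¹ * Q =
      η⁻¹ • ((1 : Matrix (Fin N) (Fin N) ℝ) -
        ((η / s ^ 2) • (Qᵀ * Q) + 1)⁻¹) := by
  set A := η • (Q * Qᵀ) + s ^ 2 • (1 : Matrix (Fin M) (Fin M) ℝ) with hAdef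
  set B := (η / s ^ 2) • (Qᵀ * Q) + (1 : Matrix (Fin N) (Fin N) ℝ) with hBdef
  have hs2 : (0:ℝ) < s ^ 2 := by positivity
  have hQQT : (Q * Qᵀ).PosSemidef := by
    simpa using posSemidef_self_mul_conjTranspose Q
  have hQTQ : (Qᵀ * Q).PosSemidef := by
    simpa using posSemidef_conjTranspose_mul_self Q
  have hA : A.PosDef :=
    Matrix.PosDef.posSemidef_add (psd_smul hQQT hη.le) (pd_smul Matrix.PosDef.one hs2)
  have hB : B.PosDef :=
    Matrix.PosDef.posSemidef_add (psd_smul hQTQ (by positivity)) Matrix.PosDef.one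
  have hdA : IsUnit A.det := hA.det_pos.ne'.isUnit
  have hdB : IsUnit B.det := hB.det_pos.ne'.isUnit
  have h1 : s ^ 2 * (η / s ^ 2) = η := by field_simp
  have hAQ : A * Q = s ^ 2 • (Q * B) := by
    rw [hAdef, hBdef]
    simp only [Matrix.add_mul, Matrix.mul_add, Matrix.smul_mul, Matrix.mul_smul,
      Matrix.one_mul, Matrix.mul_one, smul_add, smul_smul, h1, Matrix.mul_assoc]
  have hQ : Q = A⁻¹ * (s ^ 2 • (Q * B)) := by
    rw [← hAQ, ← Matrix.mul_assoc, Matrix.nonsing_inv_mul _ hdA, Matrix.one_mul]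
  have hQB : Q * B⁻¹ = s ^ 2 • (A⁻¹ * Q) := by
    calc Q * B⁻¹ = (A⁻¹ * (s ^ 2 • (Q * B))) * B⁻¹ := by rw [← hQ]
      _ = s ^ 2 • (A⁻¹ * Q) := by
          rw [Matrix.mul_smul, Matrix.smul_mul]
          simp only [Matrix.mul_assoc]
          rw [Matrix.mul_nonsing_inv _ hdB, Matrix.mul_one]
  have h2 : (1 : Matrix (Fin N) (Fin N) ℝ) - B⁻¹ = (B - 1) * B⁻¹ := by
    rw [Matrix.sub_mul, Matrix.mul_nonsing_inv _ hdB, Matrix.one_mul]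
  have h3 : B - 1 = (η / s ^ 2) • (Qᵀ * Q) := by rw [hBdef]; abel
  have h4 : η⁻¹ * (η / s ^ 2) * s ^ 2 = 1 := by field_simp
  rw [h2, h3, Matrix.smul_mul, smul_smul]
  simp only [Matrix.mul_assoc]
  rw [hQB, Matrix.mul_smul, smul_smul, h4, one_smul]

/-- Harmonic–arithmetic mean inequality for positive definite matrices. -/
lemma harmonicIneq {ι : Type*} [Fintype ι] [Nonempty ι]
    (B : ι → Matrix (Fin N) (Fin N) ℝ) (hB : ∀ i, (B i).PosDef) :
    ((∑ i, (B i)⁻¹) - ((Fintype.card ι : ℝ) ^ 2) • (∑ i, B i)⁻¹).PosSemidef := by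
  set S := ∑ i, B i with hSdef
  set c : ℝ := (Fintype.card ι : ℝ) with hc
  have hS : S.PosDef := pd_sum B hB
  have hdS : IsUnit S.det := hS.det_pos.ne'.isUnit
  set C : Matrix (Fin N) (Fin N) ℝ := c • S⁻¹ with hCdef
  have hCH : Cᴴ = C := by
    rw [hCdef, conjTranspose_smul, hS.inv.1.eq]; simp
  have claim : ∀ i, ((B i)⁻¹ + C * B i * C - (2:ℝ) • C).PosSemidef := by
    intro i
    have hdB : IsUnit (B i).det := (hB i).det_pos.ne'.isUnit
    have hM := (hB i).posSemidef.mul_mul_conjTranspose_same (C - (B i)⁻¹)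
    have hMH : (C - (B i)⁻¹)ᴴ = C - (B i)⁻¹ := by
      rw [conjTranspose_sub, hCH, (hB i).inv.1.eq]
    rw [hMH] at hM
    have hexp : (C - (B i)⁻¹) * B i * (C - (B i)⁻¹) =
        (B i)⁻¹ + C * B i * C - (2:ℝ) • C := by
      simp only [Matrix.sub_mul, Matrix.mul_sub, Matrix.mul_assoc]
      rw [Matrix.mul_nonsing_inv _ hdB, Matrix.mul_one,
        Matrix.nonsing_inv_mul_cancel_left _ _ hdB, Matrix.mul_one, two_smul]
      abel
    rw [hexp] at hM
    exact hM
  have hsum := psd_sum Finset.univ _ (fun i _ => claim i)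
  have heq : (∑ i, ((B i)⁻¹ + C * B i * C - (2:ℝ) • C)) =
      (∑ i, (B i)⁻¹) - (c ^ 2) • S⁻¹ := by
    rw [Finset.sum_sub_distrib, Finset.sum_add_distrib]
    have e1 : (∑ _i : ι, (2:ℝ) • C) = (2 * c ^ 2) • S⁻¹ := by
      rw [Finset.sum_const, Finset.card_univ, ← Nat.cast_smul_eq_nsmul ℝ,
        hCdef, smul_smul, smul_smul, ← hc]
      congr 1
      ring
    have e2 : (∑ i, C * B i * C) = (c ^ 2) • S⁻¹ := by
      have hCS : (∑ i, C * B i * C) = C * S * C := by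
        rw [hSdef, Finset.mul_sum, Finset.sum_mul]
      rw [hCS, hCdef]
      simp only [Matrix.smul_mul, Matrix.mul_smul, smul_smul]
      rw [Matrix.nonsing_inv_mul _ hdS, Matrix.one_mul]
      congr 1
      ring
    rw [e1, e2]
    have h22 : (2 * c ^ 2) • S⁻¹ = (c ^ 2) • S⁻¹ + (c ^ 2) • S⁻¹ := by
      rw [← add_smul]; congr 1; ring
    rw [h22]
    abel
  rwa [heq] at hsum

end Aux

/-- Matrix arithmetic–harmonic mean bound \eqref{Generalized} of the paper, in the Loewner
order: `∑ᵢ Qᵢᵀ (η Qᵢ Qᵢᵀ + σᵢ² I)⁻¹ Qᵢ ≼ (1/η) (k I − k² (∑ᵢ ((η/σᵢ²) Qᵢᵀ Qᵢ + I))⁻¹)`,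
i.e. the difference of the right-hand side and the left-hand side is positive
semidefinite. -/
theorem stmt_12 {k n : ℕ} (hk : 1 ≤ k) (m : Fin k → ℕ)
    (η : ℝ) (hη : 0 < η) (σ : Fin k → ℝ) (hσ : ∀ i, 0 < σ i)
    (Q : ∀ i, Matrix (Fin (m i)) (Fin n) ℝ) :
    (η⁻¹ • ((k : ℝ) • (1 : Matrix (Fin n) (Fin n) ℝ) -
        (k : ℝ) ^ 2 • (∑ i, ((η / σ i ^ 2) • ((Q i)ᵀ * Q i) +
          (1 : Matrix (Fin n) (Fin n) ℝ)))⁻¹) -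
      ∑ i, (Q i)ᵀ * (η • (Q i * (Q i)ᵀ) +
        σ i ^ 2 • (1 : Matrix (Fin (m i)) (Fin (m i)) ℝ))⁻¹ * Q i).PosSemidef := by
  haveI : NeZero k := ⟨by omega⟩
  set B : Fin k → Matrix (Fin n) (Fin n) ℝ :=
    fun i => (η / σ i ^ 2) • ((Q i)ᵀ * Q i) + 1 with hBdef
  have hB : ∀ i, (B i).PosDef := fun i => by
    have hQTQ : ((Q i)ᵀ * Q i).PosSemidef := by
      simpa using posSemidef_conjTranspose_mul_self (Q i)
    exact Matrix.PosDef.posSemidef_add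
      (psd_smul hQTQ (by have := hσ i; positivity)) Matrix.PosDef.one
  have hpush : (∑ i, (Q i)ᵀ * (η • (Q i * (Q i)ᵀ) +
        σ i ^ 2 • (1 : Matrix (Fin (m i)) (Fin (m i)) ℝ))⁻¹ * Q i) =
      η⁻¹ • ((k : ℝ) • (1 : Matrix (Fin n) (Fin n) ℝ) - ∑ i, (B i)⁻¹) := by
    rw [Finset.sum_congr rfl (fun i _ => push η hη (σ i) (hσ i) (Q i))]
    rw [← Finset.smul_sum, Finset.sum_sub_distrib, Finset.sum_const,
      Finset.card_univ, Fintype.card_fin, ← Nat.cast_smul_eq_nsmul ℝ]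
  rw [hpush, ← smul_sub]
  have hrw : ((k : ℝ) • (1 : Matrix (Fin n) (Fin n) ℝ) -
        (k : ℝ) ^ 2 • (∑ i, B i)⁻¹) -
      ((k : ℝ) • (1 : Matrix (Fin n) (Fin n) ℝ) - ∑ i, (B i)⁻¹) =
      (∑ i, (B i)⁻¹) - (k : ℝ) ^ 2 • (∑ i, B i)⁻¹ := by abel
  rw [hrw]
  have hkey := harmonicIneq B hB
  rw [Fintype.card_fin] at hkey
  exact psd_smul hkey (by positivity)
end

section
/- Let k ≥ 1 and N ≥ 1 be integers, let η > 0 and σ₁, …, σ_k > 0, and let m₁, …, m_k be positive integers. For each i let Q_i be a real m_i × 2N matrix with Q_iᵀ Q_i = (m_i/2) · I_{2N}. Then Tr[( I_{2N} + ∑_{i=1}^{k} Q_iᵀ (η Q_i Q_iᵀ + σ_i² I_{m_i})⁻¹ Q_i )⁻¹] = 2N / ( 1 + ∑_{i=1}^{k} m_i / (η m_i + 2σ_i²) ). -/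
open Matrix

/-- Distortion formula for uniform sampling (tightness of \eqref{m1minimizesD} is a
consequence): if `Qᵢᵀ Qᵢ = (mᵢ/2) I_{2N}` for every `i` (the `2N` coordinates are modelled
by `Fin N ⊕ Fin N`), then
`Tr[(I + ∑ᵢ Qᵢᵀ (η Qᵢ Qᵢᵀ + σᵢ² I)⁻¹ Qᵢ)⁻¹] = 2N / (1 + ∑ᵢ mᵢ/(η mᵢ + 2σᵢ²))`. -/
theorem stmt_16 {k N : ℕ} (hk : 1 ≤ k) (hN : 1 ≤ N)
    (η : ℝ) (hη : 0 < η) (σ : Fin k → ℝ) (hσ : ∀ i, 0 < σ i)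
    (m : Fin k → ℕ) (hm : ∀ i, 0 < m i)
    (Q : ∀ i, Matrix (Fin (m i)) (Fin N ⊕ Fin N) ℝ)
    (hQ : ∀ i, (Q i)ᵀ * Q i =
      ((m i : ℝ) / 2) • (1 : Matrix (Fin N ⊕ Fin N) (Fin N ⊕ Fin N) ℝ)) :
    Matrix.trace
        ((1 + ∑ i, (Q i)ᵀ * (η • (Q i * (Q i)ᵀ) +
          σ i ^ 2 • (1 : Matrix (Fin (m i)) (Fin (m i)) ℝ))⁻¹ * Q i)⁻¹) =
      (2 * N : ℝ) / (1 + ∑ i, (m i : ℝ) / (η * m i + 2 * σ i ^ 2)) := by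
  set t : Fin k → ℝ := fun i => (m i : ℝ) / (η * m i + 2 * σ i ^ 2) with ht
  have hden : ∀ i, 0 < η * m i + 2 * σ i ^ 2 := fun i => by
    have := hσ i
    have : (0:ℝ) < σ i ^ 2 := by positivity
    have hmi : (0:ℝ) ≤ (m i : ℝ) := Nat.cast_nonneg _
    nlinarith [mul_nonneg hη.le hmi]
  have htn : ∀ i, 0 ≤ t i := fun i => div_nonneg (Nat.cast_nonneg _) (hden i).le
  have hSpos : (0:ℝ) ≤ ∑ i, t i := Finset.sum_nonneg fun i _ => htn i
  have h1S : (1:ℝ) + ∑ i, t i ≠ 0 := by linarith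
  -- key computation for each i
  have key : ∀ i, (Q i)ᵀ * (η • (Q i * (Q i)ᵀ) +
      σ i ^ 2 • (1 : Matrix (Fin (m i)) (Fin (m i)) ℝ))⁻¹ * Q i
      = t i • (1 : Matrix (Fin N ⊕ Fin N) (Fin N ⊕ Fin N) ℝ) := by
    intro i
    set A : Matrix (Fin (m i)) (Fin (m i)) ℝ :=
      η • (Q i * (Q i)ᵀ) + σ i ^ 2 • 1 with hA
    set r : ℝ := η * (m i) / 2 + σ i ^ 2 with hr
    have hrpos : 0 < r := by
      have h1 : (0:ℝ) ≤ η * (m i) / 2 := by positivity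
      have h2 : (0:ℝ) < σ i ^ 2 := pow_pos (hσ i) 2
      rw [hr]; linarith
    -- A is positive definite, hence invertible
    have hps : (η • (Q i * (Q i)ᵀ)).PosSemidef := by
      have h1 : (Real.sqrt η • Q i) * (Real.sqrt η • Q i)ᴴ = η • (Q i * (Q i)ᵀ) := by
        have : (Real.sqrt η • Q i)ᴴ = Real.sqrt η • (Q i)ᵀ := by
          simp [conjTranspose_smul]
        rw [this, Matrix.smul_mul, Matrix.mul_smul, smul_smul,
          Real.mul_self_sqrt hη.le]
      rw [← h1]
      exact posSemidef_self_mul_conjTranspose _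
    have hpd : (σ i ^ 2 • (1 : Matrix (Fin (m i)) (Fin (m i)) ℝ)).PosDef := by
      rw [smul_one_eq_diagonal]
      exact posDef_diagonal_iff.mpr fun j => pow_pos (hσ i) 2
    have hApd : A.PosDef := Matrix.PosDef.posSemidef_add hps hpd
    have hAdet : IsUnit A.det := hApd.det_pos.ne'.isUnit
    -- A * Q i = r • Q i
    have hAQ : A * Q i = r • Q i := by
      rw [hA, Matrix.add_mul, Matrix.smul_mul, Matrix.smul_mul, Matrix.one_mul,
        Matrix.mul_assoc, hQ i, Matrix.mul_smul, Matrix.mul_one, smul_smul]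
      rw [hr, add_smul]
      ring_nf
    -- hence A⁻¹ * Q i = r⁻¹ • Q i
    have hinvQ : A⁻¹ * Q i = r⁻¹ • Q i := by
      have h1 : A⁻¹ * (A * Q i) = Q i := by
        rw [← Matrix.mul_assoc, Matrix.nonsing_inv_mul A hAdet, Matrix.one_mul]
      rw [hAQ, Matrix.mul_smul] at h1
      calc A⁻¹ * Q i = r⁻¹ • (r • (A⁻¹ * Q i)) := by
            rw [smul_smul, inv_mul_cancel₀ hrpos.ne', one_smul]
        _ = r⁻¹ • Q i := by rw [h1]
    rw [Matrix.mul_assoc, hinvQ, Matrix.mul_smul, hQ i, smul_smul]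
    congr 1
    simp only [ht]
    rw [inv_mul_eq_div, div_div]
    congr 1
    rw [hr]; ring
  simp_rw [key]
  rw [← Finset.sum_smul]
  have hone : (1 : Matrix (Fin N ⊕ Fin N) (Fin N ⊕ Fin N) ℝ) +
      (∑ i, t i) • (1 : Matrix (Fin N ⊕ Fin N) (Fin N ⊕ Fin N) ℝ)
      = (1 + ∑ i, t i) • 1 := by
    rw [add_smul, one_smul]
  rw [hone]
  have hinv : ((1 + ∑ i, t i) • (1 : Matrix (Fin N ⊕ Fin N) (Fin N ⊕ Fin N) ℝ))⁻¹
      = (1 + ∑ i, t i)⁻¹ • 1 := by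
    apply Matrix.inv_eq_right_inv
    rw [Matrix.smul_mul, Matrix.mul_smul, Matrix.one_mul, smul_smul,
      mul_inv_cancel₀ h1S, one_smul]
  rw [hinv, Matrix.trace_smul, Matrix.trace_one]
  simp only [Fintype.card_sum, Fintype.card_fin, smul_eq_mul]
  push_cast
  field_simp
  ring
end
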